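/- arXiv:0905.4555 — 9 statements merged into one kernel-verified Lean document; each statement's English description precedes it below -/
import Mathlib

section
/- Let n ≥ 1 and let α_0, …, α_n > 0 be real numbers. Suppose c lies in the hyperplane H_0 = {x ∈ ℝ^{n+1} : Σ_{i=0}^n x_i = 0} and r > 0 are such that the polytope D = conv{x ∈ A_n : q_α(x − c) = r} has affine dimension n and q_α(x − c) ≥ r for every x ∈ A_n (i.e., D is a Delaunay polytope of the lattice A_n with respect to the metric q_α). Then there exist s ∈ {1, …, n} and a vector z ∈ ℝ^{n+1} such that D = z + J(n+1,s). In particular, up to translation, the Delaunay polytopes of A_n with respect to q_α are exactly the polytopes J(n+1,s) for 1 ≤ s ≤ n. -/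
open Finset

open Pointwise

noncomputable section

/-- The lattice `A_n = {x ∈ ℤ^{n+1} : Σ x_i = 0}`, viewed inside `ℝ^{n+1}`. -/
def latticeA (n : ℕ) : Set (Fin (n+1) → ℝ) :=
  {x | (∀ i, ∃ m : ℤ, x i = m) ∧ ∑ i, x i = 0}

/-- The vertex set `W(n+1,s) = {x ∈ {0,1}^{n+1} : Σ x_i = s}`. -/
def Wset (n s : ℕ) : Set (Fin (n+1) → ℝ) :=
  {x | (∀ i, x i = 0 ∨ x i = 1) ∧ ∑ i, x i = (s : ℝ)}

/-- The quadratic form `q_α(x) = Σ α_i x_i²`. -/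
def qForm {n : ℕ} (α : Fin (n+1) → ℝ) (x : Fin (n+1) → ℝ) : ℝ :=
  ∑ i, α i * (x i) ^ 2

lemma qForm_shift {n : ℕ} (α x c : Fin (n+1) → ℝ) {i j : Fin (n+1)} (hij : i ≠ j) :
    qForm α (x + ((Pi.single j 1 - Pi.single i 1 : Fin (n+1) → ℝ)) - c) =
      qForm α (x - c) + α j * (2*(x j - c j) + 1) + α i * (1 - 2*(x i - c i)) := by
  unfold qForm
  have key : ∀ k, α k * ((x + ((Pi.single j 1 - Pi.single i 1 : Fin (n+1) → ℝ)) - c) k) ^ 2 =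
      α k * ((x - c) k) ^ 2 + ((if k = j then α j * (2*(x j - c j) + 1) else 0)
        + (if k = i then α i * (1 - 2*(x i - c i)) else 0)) := by
    intro k
    simp only [Pi.add_apply, Pi.sub_apply, Pi.single_apply]
    by_cases hkj : k = j
    · subst hkj
      simp [Ne.symm hij]
      ring
    · by_cases hki : k = i
      · subst hki
        simp [hkj]
        ring
      · simp [hkj, hki]
  rw [Finset.sum_congr rfl (fun k _ => key k)]
  rw [Finset.sum_add_distrib, Finset.sum_add_distrib]
  simp [Finset.sum_ite_eq']
  ring

lemma latticeA_swap {n : ℕ} {x : Fin (n+1) → ℝ} (hx : x ∈ latticeA n) {i j : Fin (n+1)}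
    (hij : i ≠ j) : x + ((Pi.single j 1 - Pi.single i 1 : Fin (n+1) → ℝ)) ∈ latticeA n := by
  obtain ⟨hint, hsum⟩ := hx
  constructor
  · intro k
    obtain ⟨m, hm⟩ := hint k
    by_cases hkj : k = j
    · subst hkj
      exact ⟨m + 1, by simp [Pi.single_apply, Ne.symm hij, hm]⟩
    · by_cases hki : k = i
      · subst hki
        refine ⟨m - 1, ?_⟩
        push_cast
        simp [Pi.single_apply, hkj, hm]
        ring
      · exact ⟨m, by simp [Pi.single_apply, hkj, hki, hm]⟩
  · simp [Finset.sum_add_distrib, Finset.sum_sub_distrib, hsum]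

lemma dim_lemma {n : ℕ} (hn : 1 ≤ n) (S : Set (Fin (n+1) → ℝ))
    (hsum : ∀ x ∈ S, ∑ i, x i = 0) (k : Fin (n+1)) (t : ℝ)
    (hconst : ∀ x ∈ S, x k = t)
    (hdim : Module.finrank ℝ (vectorSpan ℝ (convexHull ℝ S)) = n) : False := by
  rw [← direction_affineSpan, affineSpan_convexHull, direction_affineSpan] at hdim
  set σ : (Fin (n+1) → ℝ) →ₗ[ℝ] ℝ := ∑ i, LinearMap.proj i with hσ
  have hσap : ∀ v : Fin (n+1) → ℝ, σ v = ∑ i, v i := by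
    intro v; simp [hσ, LinearMap.sum_apply]
  set π : (Fin (n+1) → ℝ) →ₗ[ℝ] ℝ := LinearMap.proj k with hπ
  set K : Submodule ℝ (Fin (n+1) → ℝ) := LinearMap.ker π ⊓ LinearMap.ker σ with hK
  have hVK : vectorSpan ℝ S ≤ K := by
    rw [vectorSpan_def]
    rw [Submodule.span_le]
    rintro v ⟨x, hx, y, hy, rfl⟩
    constructor
    · simp [hπ, vsub_eq_sub, hconst x hx, hconst y hy]
    · simp [hσap, vsub_eq_sub, Finset.sum_sub_distrib, hsum x hx, hsum y hy]
  haveI : Nontrivial (Fin (n+1)) := Fin.nontrivial_iff_two_le.2 (by omega)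
  obtain ⟨k', hk'⟩ : ∃ k' : Fin (n+1), k' ≠ k := exists_ne k
  have hKlt : K < LinearMap.ker σ := by
    refine lt_of_le_of_ne inf_le_right ?_
    intro h
    have hv : ((Pi.single k 1 - Pi.single k' 1 : Fin (n+1) → ℝ)) ∈ LinearMap.ker σ := by
      simp [LinearMap.mem_ker, hσap, Finset.sum_sub_distrib, Pi.single_apply]
    rw [← h] at hv
    have := hv.1
    simp [hπ, LinearMap.mem_ker, Pi.single_apply, Ne.symm hk', hk'] at this
  have hσlt : LinearMap.ker σ < ⊤ := by
    refine lt_of_le_of_ne le_top ?_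
    intro h
    have hv : (fun _ => (1:ℝ) : Fin (n+1) → ℝ) ∈ LinearMap.ker σ := by
      rw [h]; trivial
    simp [LinearMap.mem_ker, hσap] at hv
    exact Nat.cast_add_one_ne_zero n hv
  have h1 : n ≤ Module.finrank ℝ K := by
    have := Submodule.finrank_mono hVK
    rwa [hdim] at this
  have h2 : Module.finrank ℝ K < Module.finrank ℝ (LinearMap.ker σ) :=
    Submodule.finrank_lt_finrank_of_lt hKlt
  have h3 : Module.finrank ℝ (LinearMap.ker σ) < Module.finrank ℝ (Fin (n+1) → ℝ) := by
    have := Submodule.finrank_lt_finrank_of_lt hσlt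
    simpa using this
  have h4 : Module.finrank ℝ (Fin (n+1) → ℝ) = n + 1 := by simp
  omega

/-- Every Delaunay polytope of `A_n` with respect to `q_α` (with all `α_i > 0`)
is, up to translation, a hypersimplex `J(n+1,s)` for some `1 ≤ s ≤ n`. -/
theorem delaunay_of_An_is_hypersimplex (n : ℕ) (hn : 1 ≤ n)
    (α : Fin (n+1) → ℝ) (hα : ∀ i, 0 < α i)
    (c : Fin (n+1) → ℝ) (hc : ∑ i, c i = 0) (r : ℝ) (hr : 0 < r)
    (D : Set (Fin (n+1) → ℝ))
    (hD : D = convexHull ℝ {x ∈ latticeA n | qForm α (x - c) = r})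
    (hdim : Module.finrank ℝ (vectorSpan ℝ D) = n)
    (hempty : ∀ x ∈ latticeA n, r ≤ qForm α (x - c)) :
    ∃ s : ℕ, 1 ≤ s ∧ s ≤ n ∧ ∃ z : Fin (n+1) → ℝ,
      D = (fun x => z + x) '' convexHull ℝ (Wset n s) := by
  classical
  set S : Set (Fin (n+1) → ℝ) := {x ∈ latticeA n | qForm α (x - c) = r} with hS
  have hSmem : ∀ x, x ∈ S ↔ x ∈ latticeA n ∧ qForm α (x - c) = r := by
    intro x; rfl
  have hSsum : ∀ x ∈ S, ∑ i, x i = 0 := fun x hx => ((hSmem x).1 hx).1.2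
  have hSint : ∀ x ∈ S, ∀ k, ∃ m : ℤ, x k = m := fun x hx => ((hSmem x).1 hx).1.1
  have hSq : ∀ x ∈ S, qForm α (x - c) = r := fun x hx => ((hSmem x).1 hx).2
  have hSlat : ∀ x ∈ S, x ∈ latticeA n := fun x hx => ((hSmem x).1 hx).1
  have hdim' : Module.finrank ℝ (vectorSpan ℝ (convexHull ℝ S)) = n := by
    rw [← hD]; exact hdim
  -- S is nonempty
  have hne : S.Nonempty := by
    rw [Set.nonempty_iff_ne_empty]
    intro h
    rw [h, convexHull_empty, vectorSpan_empty] at hdim'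
    simp at hdim'
    omega
  -- diameter bound
  have hdiam : ∀ x ∈ S, ∀ y ∈ S, ∀ i, x i ≤ y i + 1 := by
    intro x hx y hy i
    by_contra hlt
    push_neg at hlt
    obtain ⟨j, hj⟩ : ∃ j, x j < y j := by
      by_contra hno
      push_neg at hno
      have hlt' : ∑ k, y k < ∑ k, x k :=
        Finset.sum_lt_sum (fun k _ => hno k) ⟨i, Finset.mem_univ i, by linarith⟩
      rw [hSsum x hx, hSsum y hy] at hlt'
      exact lt_irrefl _ hlt'
    have hij : i ≠ j := by
      intro h; subst h; linarith
    -- integrality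
    obtain ⟨a, ha⟩ := hSint x hx i
    obtain ⟨b, hb⟩ := hSint y hy i
    obtain ⟨a', ha'⟩ := hSint x hx j
    obtain ⟨b', hb'⟩ := hSint y hy j
    have hxi2 : y i + 2 ≤ x i := by
      have : b + 1 < a := by rw [ha, hb] at hlt; exact_mod_cast hlt
      have : b + 2 ≤ a := by omega
      rw [ha, hb]; exact_mod_cast this
    have hxj1 : x j + 1 ≤ y j := by
      have : a' < b' := by rw [ha', hb'] at hj; exact_mod_cast hj
      have : a' + 1 ≤ b' := by omega
      rw [ha', hb']; exact_mod_cast this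
    have h1 := hempty _ (latticeA_swap (hSlat x hx) hij)
    have h2 := hempty _ (latticeA_swap (hSlat y hy) (Ne.symm hij))
    rw [qForm_shift α x c hij, hSq x hx] at h1
    rw [qForm_shift α y c (Ne.symm hij), hSq y hy] at h2
    nlinarith [mul_pos (hα i) (show (0:ℝ) < x i - y i - 1 by linarith),
      mul_nonneg (le_of_lt (hα j)) (show (0:ℝ) ≤ y j - x j - 1 by linarith)]
  obtain ⟨x₀, hx₀⟩ := hne
  -- the floor vector z
  set z : Fin (n+1) → ℝ := fun k => if ∃ y ∈ S, y k = x₀ k - 1 then x₀ k - 1 else x₀ k with hz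
  have hbox : ∀ v ∈ S, ∀ k, v k = z k ∨ v k = z k + 1 := by
    intro v hv k
    obtain ⟨a, ha⟩ := hSint v hv k
    obtain ⟨b, hb⟩ := hSint x₀ hx₀ k
    have h2 : x₀ k ≤ v k + 1 := hdiam x₀ hx₀ v hv k
    by_cases hw : ∃ y ∈ S, y k = x₀ k - 1
    · have hzk : z k = x₀ k - 1 := by rw [hz]; simp only [if_pos hw]
      obtain ⟨y, hy, hyk⟩ := hw
      have h3 : v k ≤ y k + 1 := hdiam v hv y hy k
      have e1 : a ≤ b := by
        have : (a:ℝ) ≤ b := by rw [← ha, ← hb]; linarith [h3, hyk]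
        exact_mod_cast this
      have e2 : b - 1 ≤ a := by
        have : (b:ℝ) - 1 ≤ a := by rw [← ha, ← hb]; linarith
        exact_mod_cast this
      have : a = b - 1 ∨ a = b := by omega
      rcases this with h | h
      · left; rw [hzk, hb, ha, h]; push_cast; ring
      · right; rw [hzk, hb, ha, h]; push_cast; ring
    · have hzk : z k = x₀ k := by rw [hz]; simp only [if_neg hw]
      have h4 : v k ≠ x₀ k - 1 := fun hcon => hw ⟨v, hv, hcon⟩
      have h1 : v k ≤ x₀ k + 1 := hdiam v hv x₀ hx₀ k
      have e1 : a ≤ b + 1 := by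
        have : (a:ℝ) ≤ b + 1 := by rw [← ha, ← hb]; linarith
        exact_mod_cast this
      have e2 : b - 1 ≤ a := by
        have : (b:ℝ) - 1 ≤ a := by rw [← ha, ← hb]; linarith
        exact_mod_cast this
      have e3 : a ≠ b - 1 := by
        intro hcon
        apply h4
        rw [hb, ha, hcon]; push_cast; ring
      have : a = b ∨ a = b + 1 := by omega
      rcases this with h | h
      · left; rw [hzk, hb, ha, h]
      · right; rw [hzk, hb, ha, h]; push_cast; ring
  -- every coordinate attains both values
  have hlow : ∀ k, ∃ v ∈ S, v k = z k := by
    intro k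
    by_contra hno
    push_neg at hno
    refine dim_lemma hn S hSsum k (z k + 1) (fun v hv => ?_) hdim'
    rcases hbox v hv k with h | h
    · exact absurd h (hno v hv)
    · exact h
  have hhigh : ∀ k, ∃ v ∈ S, v k = z k + 1 := by
    intro k
    by_contra hno
    push_neg at hno
    refine dim_lemma hn S hSsum k (z k) (fun v hv => ?_) hdim'
    rcases hbox v hv k with h | h
    · exact h
    · exact absurd h (hno v hv)
  -- the beta invariants
  set β : Fin (n+1) → ℝ := fun k => α k * (1 + 2*(z k - c k)) with hβ
  have hmove : ∀ v ∈ S, ∀ p q : Fin (n+1), p ≠ q → v p = z p + 1 → v q = z q →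
      β p ≤ β q := by
    intro v hv p q hpq hvp hvq
    have h1 := hempty _ (latticeA_swap (hSlat v hv) hpq)
    rw [qForm_shift α v c hpq, hSq v hv] at h1
    rw [hvp, hvq] at h1
    simp only [hβ]
    nlinarith [h1]
  -- all betas are equal
  obtain ⟨i₀, -, hi₀⟩ := Finset.exists_max_image (Finset.univ : Finset (Fin (n+1))) β
    ⟨0, Finset.mem_univ 0⟩
  have hball : ∀ l, β l = β i₀ := by
    by_contra hno
    push_neg at hno
    obtain ⟨l₀, hl₀⟩ := hno
    have hl₀lt : β l₀ < β i₀ := lt_of_le_of_ne (hi₀ l₀ (Finset.mem_univ l₀)) hl₀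
    have F1 : ∀ v ∈ S, (∀ k, β k = β i₀ → v k = z k) ∨ (∀ k, β k ≠ β i₀ → v k = z k + 1) := by
      intro v hv
      by_contra hcon
      push_neg at hcon
      obtain ⟨⟨k1, hk1M, hk1⟩, ⟨k2, hk2M, hk2⟩⟩ := hcon
      have hvk1 : v k1 = z k1 + 1 := by
        rcases hbox v hv k1 with h | h
        · exact absurd h hk1
        · exact h
      have hvk2 : v k2 = z k2 := by
        rcases hbox v hv k2 with h | h
        · exact h
        · exact absurd h hk2
      have hk12 : k1 ≠ k2 := by
        intro h; subst h; exact hk2M hk1M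
      have := hmove v hv k1 k2 hk12 hvk1 hvk2
      rw [hk1M] at this
      exact absurd (lt_of_le_of_ne (hi₀ k2 (Finset.mem_univ k2)) hk2M)
        (not_lt_of_ge this)
    obtain ⟨w, hw, hwl₀⟩ := hlow l₀
    have hwA : ∀ k, β k = β i₀ → w k = z k := by
      rcases F1 w hw with h | h
      · exact h
      · exfalso
        have := h l₀ hl₀
        rw [hwl₀] at this
        linarith
    obtain ⟨v, hv, hvi₀⟩ := hhigh i₀
    have hvB : ∀ k, β k ≠ β i₀ → v k = z k + 1 := by
      rcases F1 v hv with h | h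
      · exfalso
        have := h i₀ rfl
        rw [hvi₀] at this
        linarith
      · exact h
    -- sum comparison
    set B : Finset (Fin (n+1)) := Finset.univ.filter (fun k => β k ≠ β i₀) with hB
    have hsums : ∑ k, (w k - z k) = ∑ k, (v k - z k) := by
      rw [Finset.sum_sub_distrib, Finset.sum_sub_distrib, hSsum w hw, hSsum v hv]
    have hwbound : ∑ k, (w k - z k) ≤ (B.card : ℝ) := by
      have he : ∑ k, (w k - z k) = ∑ k ∈ B, (w k - z k) := by
        refine (Finset.sum_subset (Finset.subset_univ B) ?_).symm
        intro k _ hk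
        rw [hB] at hk
        simp only [Finset.mem_filter, Finset.mem_univ, true_and, not_not] at hk
        rw [hwA k hk]; ring
      rw [he]
      calc ∑ k ∈ B, (w k - z k) ≤ ∑ _k ∈ B, (1:ℝ) := by
            refine Finset.sum_le_sum (fun k _ => ?_)
            rcases hbox w hw k with h | h <;> rw [h] <;> linarith
        _ = (B.card : ℝ) := by simp
    have hvbound : (B.card : ℝ) + 1 ≤ ∑ k, (v k - z k) := by
      have hi₀B : i₀ ∉ B := by
        rw [hB]; simp
      have hsub : insert i₀ B ⊆ Finset.univ := Finset.subset_univ _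
      have h1 : ∑ k ∈ insert i₀ B, (v k - z k) ≤ ∑ k, (v k - z k) := by
        refine Finset.sum_le_sum_of_subset_of_nonneg hsub (fun k _ _ => ?_)
        rcases hbox v hv k with h | h <;> rw [h] <;> linarith
      have h2 : ∑ k ∈ insert i₀ B, (v k - z k) = (B.card : ℝ) + 1 := by
        rw [Finset.sum_insert hi₀B, hvi₀]
        have : ∑ k ∈ B, (v k - z k) = ∑ _k ∈ B, (1:ℝ) := by
          refine Finset.sum_congr rfl (fun k hk => ?_)
          rw [hB] at hk
          simp only [Finset.mem_filter, Finset.mem_univ, true_and] at hk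
          rw [hvB k hk]; ring
        rw [this]; simp; ring
      linarith
    linarith [hsums, hwbound, hvbound]
  -- swap closure
  have hswap : ∀ v ∈ S, ∀ p q : Fin (n+1), p ≠ q → v p = z p + 1 → v q = z q →
      v + ((Pi.single q 1 - Pi.single p 1 : Fin (n+1) → ℝ)) ∈ S := by
    intro v hv p q hpq hvp hvq
    rw [hSmem]
    refine ⟨latticeA_swap (hSlat v hv) hpq, ?_⟩
    rw [qForm_shift α v c hpq, hSq v hv, hvp, hvq]
    have hbpq : β p = β q := by rw [hball p, hball q]
    simp only [hβ] at hbpq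
    nlinarith [hbpq]
  -- fullness by induction on mismatch count
  have key : ∀ N : ℕ, ∀ x ∈ S, ∀ w : Fin (n+1) → ℝ,
      (∀ k, w k = z k ∨ w k = z k + 1) → (∑ k, w k = 0) →
      (Finset.univ.filter (fun k => w k ≠ x k)).card = N → w ∈ S := by
    intro N
    induction N using Nat.strong_induction_on with
    | _ N ih =>
      intro x hx w hbw hsw hcard
      by_cases hxw : w = x
      · rwa [hxw]
      · have hmis : ∃ k, w k ≠ x k := by
          by_contra hno
          push_neg at hno
          exact hxw (funext hno)
        obtain ⟨i, hi⟩ : ∃ i, w i < x i := by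
          by_contra hno
          push_neg at hno
          obtain ⟨k₀, hk₀⟩ := hmis
          have hlt : ∑ k, x k < ∑ k, w k :=
            Finset.sum_lt_sum (fun k _ => hno k)
              ⟨k₀, Finset.mem_univ k₀, lt_of_le_of_ne (hno k₀) (Ne.symm hk₀)⟩
          rw [hsw, hSsum x hx] at hlt
          exact lt_irrefl _ hlt
        obtain ⟨j, hj⟩ : ∃ j, x j < w j := by
          by_contra hno
          push_neg at hno
          have hlt : ∑ k, w k < ∑ k, x k :=
            Finset.sum_lt_sum (fun k _ => hno k)
              ⟨i, Finset.mem_univ i, hi⟩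
          rw [hsw, hSsum x hx] at hlt
          exact lt_irrefl _ hlt
        have hij : i ≠ j := by
          intro h; subst h; linarith
        have hxi : x i = z i + 1 := by
          rcases hbox x hx i with h | h
          · exfalso
            rcases hbw i with h' | h' <;> rw [h, h'] at hi <;> linarith
          · exact h
        have hwi : w i = z i := by
          rcases hbw i with h' | h'
          · exact h'
          · exfalso; rw [hxi, h'] at hi; linarith
        have hxj : x j = z j := by
          rcases hbox x hx j with h | h
          · exact h
          · exfalso
            rcases hbw j with h' | h' <;> rw [h, h'] at hj <;> linarith
        have hwj : w j = z j + 1 := by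
          rcases hbw j with h' | h'
          · exfalso; rw [hxj, h'] at hj; linarith
          · exact h'
        set x' : Fin (n+1) → ℝ := x + ((Pi.single j 1 - Pi.single i 1 : Fin (n+1) → ℝ))
          with hx'def
        have hx' : x' ∈ S := hswap x hx i j hij hxi hxj
        have hx'i : x' i = x i - 1 := by
          simp [hx'def, Pi.single_apply, hij]
          ring
        have hx'j : x' j = x j + 1 := by
          simp [hx'def, Pi.single_apply, Ne.symm hij]
        have hx'k : ∀ k, k ≠ i → k ≠ j → x' k = x k := by
          intro k hki hkj
          simp [hx'def, Pi.single_apply, hki, hkj]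
        have hsubset : Finset.univ.filter (fun k => w k ≠ x' k) ⊆
            (Finset.univ.filter (fun k => w k ≠ x k)).erase i := by
          intro k hk
          simp only [Finset.mem_filter, Finset.mem_univ, true_and] at hk
          by_cases hki : k = i
          · exfalso; apply hk; rw [hki, hx'i, hxi, hwi]; ring
          · by_cases hkj : k = j
            · exfalso; apply hk; rw [hkj, hx'j, hxj, hwj]
            · rw [Finset.mem_erase]
              refine ⟨hki, ?_⟩
              simp only [Finset.mem_filter, Finset.mem_univ, true_and]
              rw [← hx'k k hki hkj]
              exact hk
        have hiin : i ∈ Finset.univ.filter (fun k => w k ≠ x k) := by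
          simp only [Finset.mem_filter, Finset.mem_univ, true_and]
          intro h; rw [h] at hi; exact lt_irrefl _ hi
        have hlt : (Finset.univ.filter (fun k => w k ≠ x' k)).card < N := by
          calc (Finset.univ.filter (fun k => w k ≠ x' k)).card
              ≤ ((Finset.univ.filter (fun k => w k ≠ x k)).erase i).card :=
                Finset.card_le_card hsubset
            _ < (Finset.univ.filter (fun k => w k ≠ x k)).card :=
                Finset.card_erase_lt_of_mem hiin
            _ = N := hcard
        exact ih _ hlt x' hx' w hbw hsw rfl
  have hfull : ∀ w : Fin (n+1) → ℝ, (∀ k, w k = z k ∨ w k = z k + 1) →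
      (∑ k, w k = 0) → w ∈ S := by
    intro w h1 h2
    exact key _ x₀ hx₀ w h1 h2 rfl
  -- the parameter s
  set sN : ℕ := (Finset.univ.filter (fun k => x₀ k = z k + 1)).card with hsN
  have hsum_eq : ∀ v ∈ S, ∑ k, (v k - z k) = (sN : ℝ) := by
    intro v hv
    have h1 : ∑ k, (v k - z k) = ∑ k, (x₀ k - z k) := by
      rw [Finset.sum_sub_distrib, Finset.sum_sub_distrib, hSsum v hv, hSsum x₀ hx₀]
    rw [h1]
    have h2 : ∑ k, (x₀ k - z k) = ∑ k, (if x₀ k = z k + 1 then (1:ℝ) else 0) := by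
      refine Finset.sum_congr rfl (fun k _ => ?_)
      rcases hbox x₀ hx₀ k with h | h
      · rw [h]; simp
      · rw [h]; simp
    rw [h2, Finset.sum_boole, hsN]
  have hs1 : 1 ≤ sN := by
    obtain ⟨v, hv, hv0⟩ := hhigh 0
    have h1 := hsum_eq v hv
    have h2 : (1:ℝ) ≤ ∑ k, (v k - z k) := by
      have he : ∑ k, (v k - z k) = (v 0 - z 0) + ∑ k ∈ Finset.univ.erase 0, (v k - z k) :=
        (Finset.add_sum_erase _ _ (Finset.mem_univ 0)).symm
      have hnn : (0:ℝ) ≤ ∑ k ∈ Finset.univ.erase 0, (v k - z k) := by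
        refine Finset.sum_nonneg (fun k _ => ?_)
        rcases hbox v hv k with h | h <;> rw [h] <;> linarith
      rw [he, hv0]
      linarith
    rw [h1] at h2
    exact_mod_cast h2
  have hsn : sN ≤ n := by
    obtain ⟨v, hv, hv0⟩ := hlow 0
    have h1 := hsum_eq v hv
    have h2 : ∑ k, (v k - z k) ≤ (n : ℝ) := by
      have he : ∑ k, (v k - z k) = (v 0 - z 0) + ∑ k ∈ Finset.univ.erase 0, (v k - z k) :=
        (Finset.add_sum_erase _ _ (Finset.mem_univ 0)).symm
      rw [he, hv0]
      have hcarde : (Finset.univ.erase (0 : Fin (n+1))).card = n := by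
        rw [Finset.card_erase_of_mem (Finset.mem_univ 0)]
        simp
      have hbnd : ∑ k ∈ Finset.univ.erase (0 : Fin (n+1)), (v k - z k) ≤ (n:ℝ) := by
        calc ∑ k ∈ Finset.univ.erase (0 : Fin (n+1)), (v k - z k)
              ≤ ∑ _k ∈ Finset.univ.erase (0 : Fin (n+1)), (1:ℝ) := by
              refine Finset.sum_le_sum (fun k _ => ?_)
              rcases hbox v hv k with h | h <;> rw [h] <;> linarith
          _ = ((Finset.univ.erase (0 : Fin (n+1))).card : ℝ) := by simp
          _ = (n:ℝ) := by rw [hcarde]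
      linarith
    rw [h1] at h2
    exact_mod_cast h2
  -- S is the translated hypersimplex vertex set
  have hSeq : S = (fun x => z + x) '' Wset n sN := by
    ext x
    constructor
    · intro hx
      refine ⟨x - z, ⟨?_, ?_⟩, by funext k; simp⟩
      · intro k
        rcases hbox x hx k with h | h
        · left; simp [h]
        · right; simp [h]
      · have h := hsum_eq x hx
        simpa [Pi.sub_apply] using h
    · rintro ⟨w, ⟨hw1, hw2⟩, rfl⟩
      refine hfull _ (fun k => ?_) ?_
      · rcases hw1 k with h | h
        · left; simp [h]
        · right; simp [h]
      · have hzsum : ∑ k, z k = -(sN : ℝ) := by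
          have := hsum_eq x₀ hx₀
          rw [Finset.sum_sub_distrib, hSsum x₀ hx₀] at this
          linarith
        have : ∑ k, (z + w) k = ∑ k, z k + ∑ k, w k := by
          simp [Finset.sum_add_distrib]
        rw [this, hzsum, hw2]
        ring
  refine ⟨sN, hs1, hsn, z, ?_⟩
  rw [hD, hSeq,
    show (fun x => z + x) '' (Wset n sN) = z +ᵥ (Wset n sN) from rfl,
    show (fun x => z + x) '' (convexHull ℝ (Wset n sN)) = z +ᵥ (convexHull ℝ (Wset n sN)) from rfl,
    convexHull_vadd]
end
end

section
/- Let n ≥ 1, 1 ≤ s ≤ n, and α_0, …, α_n > 0. Define C = (s − (n+1)/2)/(Σ_{i=0}^n 1/α_i) and c_α = (1/2 + C/α_0, …, 1/2 + C/α_n). Then Σ_{i=0}^n (c_α)_i = s, and there exists r > 0 such that q_α(v − c_α) = r for every v ∈ W(n+1,s) and q_α(u − c_α) > r for every u ∈ V_{n,s} \ W(n+1,s). In other words, J(n+1,s) is a Delaunay polytope of the point lattice V_{n,s} with respect to q_α, with circumcenter c_α. -/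
open Finset

noncomputable section

/-- The point lattice `V_{n,s} = {x ∈ ℤ^{n+1} : Σ x_i = s}`. -/
def Vset (n s : ℕ) : Set (Fin (n+1) → ℝ) :=
  {x | (∀ i, ∃ m : ℤ, x i = m) ∧ ∑ i, x i = (s : ℝ)}

lemma int_half_sq (m : ℤ) : (1:ℝ)/4 ≤ ((m:ℝ) - 1/2)^2 := by
  have h : (0:ℤ) ≤ m * (m - 1) := by
    rcases le_or_gt m 0 with h | h
    · nlinarith [mul_nonneg (neg_nonneg.mpr h) (show (0:ℤ) ≤ 1 - m by omega)]
    · exact mul_nonneg (by omega) (by omega)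
  have h' : (0:ℝ) ≤ (m:ℝ) * ((m:ℝ) - 1) := by exact_mod_cast h
  nlinarith

lemma int_half_sq_strict (m : ℤ) (h0 : m ≠ 0) (h1 : m ≠ 1) :
    (1:ℝ)/4 < ((m:ℝ) - 1/2)^2 := by
  have h : (0:ℤ) < m * (m - 1) := by
    rcases le_or_gt m 0 with h | h
    · nlinarith [mul_pos (show (0:ℤ) < -m by omega) (show (0:ℤ) < 1 - m by omega)]
    · exact mul_pos (by omega) (by omega)
  have h' : (0:ℝ) < (m:ℝ) * ((m:ℝ) - 1) := by exact_mod_cast h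
  nlinarith

/-- `J(n+1,s)` is a Delaunay polytope of the point lattice `V_{n,s}` with respect to `q_α`,
with circumcenter `c_α = (1/2 + C/α_0, …, 1/2 + C/α_n)`,
where `C = (s − (n+1)/2)/(Σ 1/α_i)`. -/
theorem hypersimplex_is_delaunay (n s : ℕ) (hn : 1 ≤ n) (hs1 : 1 ≤ s) (hsn : s ≤ n)
    (α : Fin (n+1) → ℝ) (hα : ∀ i, 0 < α i) :
    let C : ℝ := ((s : ℝ) - ((n : ℝ) + 1) / 2) / (∑ i, (α i)⁻¹)
    let cα : Fin (n+1) → ℝ := fun i => 1 / 2 + C / α i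
    (∑ i, cα i = (s : ℝ)) ∧
    ∃ r : ℝ, 0 < r ∧
      (∀ v ∈ Wset n s, qForm α (v - cα) = r) ∧
      (∀ u ∈ Vset n s \ Wset n s, r < qForm α (u - cα)) := by
  intro C cα
  set S : ℝ := ∑ i, (α i)⁻¹ with hSdef
  have hS : 0 < S := Finset.sum_pos (fun i _ => inv_pos.mpr (hα i)) univ_nonempty
  have hCS : C * S = (s : ℝ) - ((n : ℝ) + 1) / 2 := div_mul_cancel₀ _ hS.ne'
  set A : ℝ := ∑ i, α i with hAdef
  have hA : 0 < A := Finset.sum_pos (fun i _ => hα i) univ_nonempty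
  -- expansion of qForm for any x with ∑ x = s
  have expand : ∀ x : Fin (n+1) → ℝ, ∑ i, x i = (s : ℝ) →
      qForm α (x - cα) = (∑ i, α i * (x i - 1/2)^2) - C^2 * S := by
    intro x hx
    have key : ∀ i : Fin (n+1), α i * ((x - cα) i)^2
        = α i * (x i - 1/2)^2 - 2*C*(x i) + C + C^2 * (α i)⁻¹ := by
      intro i
      have hαi := (hα i).ne'
      simp only [Pi.sub_apply, cα]
      field_simp
      ring
    unfold qForm
    rw [Finset.sum_congr rfl (fun i _ => key i)]
    rw [Finset.sum_add_distrib, Finset.sum_add_distrib, Finset.sum_sub_distrib]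
    rw [← Finset.mul_sum, hx, ← Finset.mul_sum, ← hSdef, Finset.sum_const]
    simp only [Finset.card_univ, Fintype.card_fin, nsmul_eq_mul]
    push_cast
    nlinarith [hCS]
  -- sum of center coordinates
  have hsum : ∑ i, cα i = (s : ℝ) := by
    have h1 : ∑ i, cα i = ((n:ℝ)+1) * (1/2) + C * S := by
      simp only [cα, Finset.sum_add_distrib, Finset.sum_const, Finset.card_univ,
        Fintype.card_fin, nsmul_eq_mul, div_eq_mul_inv, ← Finset.mul_sum, ← hSdef]
      push_cast; ring
    rw [h1, hCS]; ring
  refine ⟨hsum, A/4 - C^2 * S, ?_, ?_, ?_⟩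
  · -- positivity of r
    have hCauchy : ((n:ℝ)+1)^2 ≤ A * S := by
      have h := Finset.sum_mul_sq_le_sq_mul_sq Finset.univ
        (fun i => Real.sqrt (α i)) (fun i => Real.sqrt (α i)⁻¹)
      have h1 : ∀ i : Fin (n+1), Real.sqrt (α i) * Real.sqrt (α i)⁻¹ = 1 := by
        intro i
        rw [← Real.sqrt_mul (hα i).le, mul_inv_cancel₀ (hα i).ne', Real.sqrt_one]
      have h2 : ∀ i : Fin (n+1), Real.sqrt (α i) ^ 2 = α i :=
        fun i => Real.sq_sqrt (hα i).le
      have h3 : ∀ i : Fin (n+1), Real.sqrt (α i)⁻¹ ^ 2 = (α i)⁻¹ :=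
        fun i => Real.sq_sqrt (inv_pos.mpr (hα i)).le
      simp only [h1, h2, h3, Finset.sum_const, Finset.card_univ, Fintype.card_fin,
        nsmul_eq_mul, mul_one] at h
      calc ((n:ℝ)+1)^2 = ((n+1 : ℕ) : ℝ)^2 := by push_cast; ring
        _ ≤ A * S := by exact_mod_cast h
    have hCsq : C^2 * S = ((s : ℝ) - ((n : ℝ) + 1) / 2)^2 / S := by
      rw [← hCS]
      field_simp
    rw [hCsq, sub_pos, div_lt_iff₀ hS]
    have hs1' : (1:ℝ) ≤ (s:ℝ) := by exact_mod_cast hs1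
    have hsn' : (s:ℝ) ≤ (n:ℝ) := by exact_mod_cast hsn
    nlinarith [mul_pos (by linarith : (0:ℝ) < (s:ℝ)) (by linarith : (0:ℝ) < (n:ℝ)+1-(s:ℝ)), hCauchy]
  · -- on W
    intro v hv
    rw [expand v hv.2]
    have : ∀ i : Fin (n+1), α i * (v i - 1/2)^2 = α i * (1/4) := by
      intro i
      rcases hv.1 i with h | h <;> rw [h] <;> norm_num
    rw [Finset.sum_congr rfl (fun i _ => this i), ← Finset.sum_mul, ← hAdef]
    ring
  · -- strictly outside W
    intro u hu
    obtain ⟨⟨hint, husum⟩, hnotW⟩ := hu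
    rw [expand u husum]
    have hex : ∃ j : Fin (n+1), u j ≠ 0 ∧ u j ≠ 1 := by
      by_contra h
      push_neg at h
      apply hnotW
      refine ⟨fun i => ?_, husum⟩
      rcases eq_or_ne (u i) 0 with h0 | h0
      · exact Or.inl h0
      · exact Or.inr (h i h0)
    obtain ⟨j, hj0, hj1⟩ := hex
    have hlt : A / 4 < ∑ i, α i * (u i - 1/2)^2 := by
      have hA4 : A / 4 = ∑ i, α i * (1/4) := by
        rw [← Finset.sum_mul, ← hAdef]; ring
      rw [hA4]
      apply Finset.sum_lt_sum
      · intro i _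
        obtain ⟨m, hm⟩ := hint i
        rw [hm]
        exact mul_le_mul_of_nonneg_left (int_half_sq m) (hα i).le
      · refine ⟨j, Finset.mem_univ j, ?_⟩
        obtain ⟨m, hm⟩ := hint j
        rw [hm]
        apply mul_lt_mul_of_pos_left _ (hα j)
        apply int_half_sq_strict
        · intro h; apply hj0; rw [hm, h]; norm_num
        · intro h; apply hj1; rw [hm, h]; norm_num
    linarith
end
end

section
/- Let n ≥ 3 and 2 ≤ s ≤ n − 1. Let Q(x) = Σ_{0 ≤ i,j ≤ n} a_{ij} x_i x_j be a quadratic form on ℝ^{n+1} with a_{ij} = a_{ji}. Suppose there exist c ∈ ℝ^{n+1} with Σ_{i=0}^n c_i = s and r > 0 such that Q(v − c) = r for all v ∈ W(n+1,s) and Q(u − c) > r for all u ∈ V_{n,s} \ W(n+1,s). Then there exist α_0, …, α_n > 0 such that Q(x) = q_α(x) for every x ∈ ℝ^{n+1} with Σ_{i=0}^n x_i = 0; that is, every metric making J(n+1,s) a Delaunay polytope restricts on the hyperplane spanned by A_n to a form q_α with all α_i > 0. -/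
open Finset

noncomputable section

namespace DelAux

variable {n : ℕ}

/-- Bilinear form attached to the matrix `a`. -/
def B (a : Fin (n+1) → Fin (n+1) → ℝ) (x y : Fin (n+1) → ℝ) : ℝ :=
  ∑ i, ∑ j, a i j * x i * y j

/-- The vector `e_i - e_j`. -/
def dd (i j : Fin (n+1)) : Fin (n+1) → ℝ := Pi.single i 1 - Pi.single j 1

lemma dd_apply (i j m : Fin (n+1)) :
    dd i j m = (if m = i then (1:ℝ) else 0) - (if m = j then (1:ℝ) else 0) := by
  simp [dd, Pi.single_apply]

lemma sum_dd (i j : Fin (n+1)) : ∑ m, dd i j m = 0 := by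
  simp [dd_apply, Finset.sum_sub_distrib]

lemma B_symm (a : Fin (n+1) → Fin (n+1) → ℝ) (hsym : ∀ i j, a i j = a j i)
    (x y : Fin (n+1) → ℝ) : B a x y = B a y x := by
  rw [B, Finset.sum_comm]
  refine Finset.sum_congr rfl fun i _ => Finset.sum_congr rfl fun j _ => ?_
  rw [hsym]; ring

lemma B_add_add (a : Fin (n+1) → Fin (n+1) → ℝ) (hsym : ∀ i j, a i j = a j i)
    (x y : Fin (n+1) → ℝ) :
    B a (x + y) (x + y) = B a x x + 2 * B a x y + B a y y := by
  have h : B a (x+y) (x+y) = B a x x + B a x y + B a y x + B a y y := by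
    simp only [B, Pi.add_apply]
    rw [← Finset.sum_add_distrib, ← Finset.sum_add_distrib, ← Finset.sum_add_distrib]
    refine Finset.sum_congr rfl fun i _ => ?_
    rw [← Finset.sum_add_distrib, ← Finset.sum_add_distrib, ← Finset.sum_add_distrib]
    refine Finset.sum_congr rfl fun j _ => ?_
    ring
  rw [h, B_symm a hsym y x]; ring

/-- `B x (dd i j) = M i x - M j x` where `M k x = ∑ a m k * x m`. -/
lemma B_dd_right (a : Fin (n+1) → Fin (n+1) → ℝ) (x : Fin (n+1) → ℝ) (i j : Fin (n+1)) :
    B a x (dd i j) = (∑ m, a m i * x m) - ∑ m, a m j * x m := by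
  rw [B, ← Finset.sum_sub_distrib]
  refine Finset.sum_congr rfl fun m _ => ?_
  have : ∀ k, ∑ l, a m l * x m * (if (l:Fin (n+1)) = k then (1:ℝ) else 0) = a m k * x m := by
    intro k
    rw [Finset.sum_congr rfl (fun l _ => by rw [mul_ite, mul_one, mul_zero]),
      Finset.sum_ite_eq' univ k (fun l => a m l * x m)]
    simp
  calc ∑ l, a m l * x m * dd i j l
      = ∑ l, (a m l * x m * (if l = i then (1:ℝ) else 0)
          - a m l * x m * (if l = j then (1:ℝ) else 0)) := by
        refine Finset.sum_congr rfl fun l _ => ?_; rw [dd_apply]; ring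
    _ = a m i * x m - a m j * x m := by
        rw [Finset.sum_sub_distrib, this i, this j]

lemma F_formula (a : Fin (n+1) → Fin (n+1) → ℝ) (i j : Fin (n+1)) :
    B a (dd i j) (dd i j) = a i i + a j j - a i j - a j i := by
  rw [B_dd_right]
  have h1 : ∀ k, ∑ m, a m k * dd i j m = a i k - a j k := by
    intro k
    calc ∑ m, a m k * dd i j m
        = ∑ m, ((if m = i then (1:ℝ) else 0) * a m k - (if m = j then (1:ℝ) else 0) * a m k) := by
          refine Finset.sum_congr rfl fun m _ => ?_; rw [dd_apply]; ring
      _ = a i k - a j k := by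
          rw [Finset.sum_sub_distrib]
          simp
  rw [h1 i, h1 j]; ring

lemma B_add_right (a : Fin (n+1) → Fin (n+1) → ℝ) (x y z : Fin (n+1) → ℝ) :
    B a x (y + z) = B a x y + B a x z := by
  simp only [B, Pi.add_apply]
  rw [← Finset.sum_add_distrib]
  refine Finset.sum_congr rfl fun i _ => ?_
  rw [← Finset.sum_add_distrib]
  exact Finset.sum_congr rfl fun j _ => by ring

end DelAux

open DelAux

/-- Every metric making `J(n+1,s)` a Delaunay polytope of `V_{n,s}` restricts, on the
hyperplane `Σ x_i = 0` spanned by `A_n`, to a form `q_α` with all `α_i > 0`. -/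
theorem delaunay_metric_is_qAlpha (n : ℕ) (hn : 3 ≤ n) (s : ℕ) (hs : 2 ≤ s)
    (hsn : s + 1 ≤ n)
    (a : Fin (n+1) → Fin (n+1) → ℝ) (hsym : ∀ i j, a i j = a j i)
    (Q : (Fin (n+1) → ℝ) → ℝ) (hQ : ∀ x, Q x = ∑ i, ∑ j, a i j * x i * x j)
    (c : Fin (n+1) → ℝ) (hc : ∑ i, c i = (s : ℝ)) (r : ℝ) (hr : 0 < r)
    (heq : ∀ v ∈ Wset n s, Q (v - c) = r)
    (hgt : ∀ u ∈ Vset n s \ Wset n s, r < Q (u - c)) :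
    ∃ α : Fin (n+1) → ℝ, (∀ i, 0 < α i) ∧
      ∀ x : Fin (n+1) → ℝ, ∑ i, x i = 0 → Q x = qForm α x := by
  classical
  have hQB : ∀ x, Q x = B a x x := fun x => (hQ x).trans rfl
  set F : Fin (n+1) → Fin (n+1) → ℝ := fun i j => B a (dd i j) (dd i j) with hFdef
  have hFsymm : ∀ i j, F i j = F j i := by
    intro i j; simp only [hFdef]; rw [F_formula, F_formula]; ring
  -- indicator vertices
  have hWind : ∀ T : Finset (Fin (n+1)), T.card = s →
      (fun m => if m ∈ T then (1:ℝ) else 0) ∈ Wset n s := by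
    intro T hT
    constructor
    · intro m; by_cases h : m ∈ T <;> simp [h]
    · rw [Finset.sum_ite_mem, Finset.univ_inter, Finset.sum_const, nsmul_eq_mul, mul_one, hT]
  -- Step 1: the swap relation
  have hR1 : ∀ v ∈ Wset n s, ∀ i j : Fin (n+1), v i = 1 → v j = 0 →
      2 * B a (v - c) (dd j i) + F j i = 0 := by
    intro v hv i j hvi hvj
    have hij : j ≠ i := by intro h; rw [h, hvi] at hvj; norm_num at hvj
    have hw : (v + dd j i) ∈ Wset n s := by
      constructor
      · intro m
        by_cases hmj : m = j
        · subst hmj; right; simp [dd_apply, hij, hvj]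
        · by_cases hmi : m = i
          · subst hmi; left; simp [dd_apply, hij.symm, hvi, Ne.symm hij]
          · have : dd j i m = 0 := by simp [dd_apply, hmj, hmi]
            simpa [this] using hv.1 m
      · simp only [Pi.add_apply]
        rw [Finset.sum_add_distrib, hv.2, sum_dd, add_zero]
    have h1 := heq v hv
    have h2 := heq _ hw
    have hwc : (v + dd j i) - c = (v - c) + dd j i := by funext m; simp; ring
    rw [hwc, hQB, B_add_add a hsym, ← hQB, h1] at h2
    simp only [hFdef]
    linarith
  -- Step 2: the four-point relation
  have hStar : ∀ i k j l : Fin (n+1), j ≠ i → j ≠ k → l ≠ i → l ≠ k →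
      F j i + F l k = F j k + F l i := by
    intro i k j l hji hjk hli hlk
    by_cases hik : i = k
    · subst hik; ring
    -- build a vertex with ones at i,k and zeros at j,l
    have hsub : ({i, k} : Finset (Fin (n+1))) ⊆ univ \ {j, l} := by
      intro m hm
      simp only [Finset.mem_insert, Finset.mem_singleton] at hm
      simp only [Finset.mem_sdiff, Finset.mem_univ, true_and, Finset.mem_insert,
        Finset.mem_singleton, not_or]
      rcases hm with h | h <;> subst h
      · exact ⟨fun h => hji h.symm, fun h => hli h.symm⟩
      · exact ⟨fun h => hjk h.symm, fun h => hlk h.symm⟩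
    have hcard2 : ({i, k} : Finset (Fin (n+1))).card = 2 := Finset.card_pair hik
    have hcardA : s ≤ (univ \ ({j, l} : Finset (Fin (n+1)))).card := by
      have h1 : (univ \ ({j, l} : Finset (Fin (n+1)))).card
          = (n+1) - ({j, l} : Finset (Fin (n+1))).card := by
        rw [Finset.card_sdiff_of_subset (Finset.subset_univ _), Finset.card_univ, Fintype.card_fin]
      have h2 : ({j, l} : Finset (Fin (n+1))).card ≤ 2 :=
        le_trans (Finset.card_insert_le _ _) (by simp)
      omega
    obtain ⟨T, hTsub, hTA, hTcard⟩ := Finset.exists_subsuperset_card_eq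
      (n := s - 2 + ({i, k} : Finset (Fin (n+1))).card) hsub (by omega) (by omega)
    have hTs : T.card = s := by omega
    set v : Fin (n+1) → ℝ := fun m => if m ∈ T then (1:ℝ) else 0 with hvdef
    have hv := hWind T hTs
    have hvi : v i = 1 := by
      simp only [hvdef, if_pos (hTsub (by simp : i ∈ ({i,k} : Finset _)))]
    have hvk : v k = 1 := by
      simp only [hvdef, if_pos (hTsub (by simp : k ∈ ({i,k} : Finset _)))]
    have hnot : ∀ m ∈ ({j, l} : Finset (Fin (n+1))), v m = 0 := by
      intro m hm
      have : m ∉ T := fun hmT => by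
        have := hTA hmT; simp only [Finset.mem_sdiff] at this; exact this.2 hm
      simp only [hvdef, if_neg this]
    have hvj : v j = 0 := hnot j (by simp)
    have hvl : v l = 0 := hnot l (by simp)
    have e1 := hR1 v hv i j hvi hvj
    have e2 := hR1 v hv k j hvk hvj
    have e3 := hR1 v hv i l hvi hvl
    have e4 := hR1 v hv k l hvk hvl
    rw [B_dd_right] at e1 e2 e3 e4
    linarith
  -- pick three distinct indices
  have h4 : 4 ≤ n + 1 := by omega
  set i0 : Fin (n+1) := ⟨0, by omega⟩
  set i1 : Fin (n+1) := ⟨1, by omega⟩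
  set i2 : Fin (n+1) := ⟨2, by omega⟩
  have h01 : i0 ≠ i1 := by simp [i0, i1, Fin.ext_iff]
  have h02 : i0 ≠ i2 := by simp [i0, i2, Fin.ext_iff]
  have h12 : i1 ≠ i2 := by simp [i1, i2, Fin.ext_iff]
  have hthird : ∀ i j : Fin (n+1), ∃ k, k ≠ i ∧ k ≠ j := by
    intro i j
    by_cases h0 : i0 = i ∨ i0 = j
    · by_cases h1 : i1 = i ∨ i1 = j
      · rcases h0 with h0 | h0 <;> rcases h1 with h1 | h1
        · exact absurd (h0.trans h1.symm) h01
        · exact ⟨i2, h0 ▸ Ne.symm h02, h1 ▸ Ne.symm h12⟩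
        · exact ⟨i2, h1 ▸ Ne.symm h12, h0 ▸ Ne.symm h02⟩
        · exact absurd (h0.trans h1.symm) h01
      · push_neg at h1; exact ⟨i1, h1.1, h1.2⟩
    · push_neg at h0; exact ⟨i0, h0.1, h0.2⟩
  -- exchange lemma for G
  have hGchange : ∀ i j k k' : Fin (n+1), j ≠ i → k ≠ i → k' ≠ i → k ≠ j → k' ≠ j →
      F i j + F i k - F j k = F i j + F i k' - F j k' := by
    intro i j k k' hji hki hk'i hkj hk'j
    have := hStar k k' i j (Ne.symm hki) (Ne.symm hk'i) (Ne.symm hkj) (Ne.symm hk'j)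
    linarith
  have hGfull : ∀ i j k j' k' : Fin (n+1), j ≠ i → k ≠ i → j ≠ k → j' ≠ i → k' ≠ i → j' ≠ k' →
      F i j + F i k - F j k = F i j' + F i k' - F j' k' := by
    intro i j k j' k' hji hki hjk hj'i hk'i hj'k'
    by_cases hjj : j' = j
    · subst hjj
      exact hGchange i j' k k' hj'i hki hk'i (Ne.symm hjk) (Ne.symm hj'k')
    · calc F i j + F i k - F j k = F i j + F i j' - F j j' :=
            hGchange i j k j' hji hki hj'i (Ne.symm hjk) hjj
        _ = F i j' + F i j - F j' j := by rw [hFsymm j j']; ring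
        _ = F i j' + F i k' - F j' k' :=
            hGchange i j' j k' hj'i hji hk'i (fun h => hjj h.symm) (Ne.symm hj'k')
  -- define α
  set p : Fin (n+1) → Fin (n+1) := fun i => if i = i0 then i1 else i0 with hpdef
  set q : Fin (n+1) → Fin (n+1) := fun i => if i = i0 ∨ i = i1 then i2 else i1 with hqdef
  have hpne : ∀ i, p i ≠ i := by
    intro i; simp only [hpdef]
    by_cases h : i = i0
    · rw [if_pos h, h]; exact Ne.symm h01
    · rw [if_neg h]; exact fun hh => h hh.symm
  have hqne : ∀ i, q i ≠ i := by
    intro i; simp only [hqdef]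
    by_cases h : i = i0 ∨ i = i1
    · rw [if_pos h]
      rcases h with h | h <;> rw [h]
      · exact Ne.symm h02
      · exact Ne.symm h12
    · rw [if_neg h]
      push_neg at h
      exact fun hh => h.2 hh.symm
  have hpqne : ∀ i, p i ≠ q i := by
    intro i; simp only [hpdef, hqdef]
    by_cases h0 : i = i0
    · rw [if_pos h0, if_pos (Or.inl h0)]; exact h12
    · rw [if_neg h0]
      by_cases h1 : i = i1
      · rw [if_pos (Or.inr h1)]; exact h02
      · rw [if_neg (by tauto)]; exact h01
  set α : Fin (n+1) → ℝ := fun i => (F i (p i) + F i (q i) - F (p i) (q i)) / 2 with hαdef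
  have hαG : ∀ i j k : Fin (n+1), j ≠ i → k ≠ i → j ≠ k →
      α i = (F i j + F i k - F j k) / 2 := by
    intro i j k hji hki hjk
    simp only [hαdef]
    rw [hGfull i (p i) (q i) j k (hpne i) (hqne i) (hpqne i) hji hki hjk]
  have hαF : ∀ i j : Fin (n+1), i ≠ j → F i j = α i + α j := by
    intro i j hij
    obtain ⟨k, hki, hkj⟩ := hthird i j
    rw [hαG i j k (Ne.symm hij) hki (fun h => hkj h.symm),
      hαG j i k hij hkj (fun h => hki h.symm)]
    have := hFsymm i j
    have := hFsymm j k
    have := hFsymm i k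
    linarith
  -- main identity on the hyperplane
  have him : ∀ x : Fin (n+1) → ℝ, ∑ i, x i = 0 → Q x = qForm α x := by
    intro x hx
    have hF2 : ∀ i j, a i j + a j i
        = a i i + a j j - α i - α j + (if i = j then 2 * α i else 0) := by
      intro i j
      by_cases h : i = j
      · subst h
        rw [if_pos rfl]
        ring
      · have h1 := hαF i j h
        simp only [hFdef] at h1
        rw [F_formula] at h1
        simp only [if_neg h]
        linarith
    have hz_left : ∀ f : Fin (n+1) → ℝ, ∑ i, ∑ j, f i * x i * x j = 0 := by
      intro f
      refine Finset.sum_eq_zero fun i _ => ?_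
      rw [← Finset.mul_sum, hx, mul_zero]
    have hz_right : ∀ f : Fin (n+1) → ℝ, ∑ i, ∑ j, f j * x i * x j = 0 := by
      intro f
      rw [Finset.sum_comm]
      refine Finset.sum_eq_zero fun j _ => ?_
      calc ∑ i, f j * x i * x j = ∑ i, f j * x j * x i :=
            Finset.sum_congr rfl fun i _ => by ring
        _ = 0 := by rw [← Finset.mul_sum, hx, mul_zero]
    have hite : ∑ i, ∑ j, (if i = j then 2 * α i else 0) * x i * x j
        = ∑ i, 2 * (α i * x i ^ 2) := by
      refine Finset.sum_congr rfl fun i _ => ?_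
      have : ∀ j, (if i = j then 2 * α i else 0) * x i * x j
          = if j = i then 2 * α i * x i * x j else 0 := by
        intro j; by_cases h : i = j
        · subst h; simp
        · rw [if_neg h, zero_mul, zero_mul, if_neg (Ne.symm h)]
      rw [Finset.sum_congr rfl fun j _ => this j,
        Finset.sum_ite_eq' univ i (fun j => 2 * α i * x i * x j)]
      simp; ring
    have h2Q : 2 * Q x = ∑ i, ∑ j, (a i j + a j i) * x i * x j := by
      rw [hQ]
      have hswap : ∑ i, ∑ j, a j i * x i * x j = ∑ i, ∑ j, a i j * x i * x j := by
        rw [Finset.sum_comm]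
        exact Finset.sum_congr rfl fun i _ => Finset.sum_congr rfl fun j _ => by ring
      calc 2 * (∑ i, ∑ j, a i j * x i * x j)
          = ∑ i, ∑ j, a i j * x i * x j + ∑ i, ∑ j, a j i * x i * x j := by
            rw [hswap]; ring
        _ = ∑ i, ∑ j, (a i j + a j i) * x i * x j := by
            rw [← Finset.sum_add_distrib]
            refine Finset.sum_congr rfl fun i _ => ?_
            rw [← Finset.sum_add_distrib]
            exact Finset.sum_congr rfl fun j _ => by ring
    have hexp : ∑ i, ∑ j, (a i j + a j i) * x i * x j
        = ∑ i, ∑ j, (a i i * x i * x j) + (∑ i, ∑ j, a j j * x i * x j)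
          - (∑ i, ∑ j, α i * x i * x j) - (∑ i, ∑ j, α j * x i * x j)
          + ∑ i, ∑ j, (if i = j then 2 * α i else 0) * x i * x j := by
      rw [← Finset.sum_add_distrib, ← Finset.sum_sub_distrib, ← Finset.sum_sub_distrib,
        ← Finset.sum_add_distrib]
      refine Finset.sum_congr rfl fun i _ => ?_
      rw [← Finset.sum_add_distrib, ← Finset.sum_sub_distrib, ← Finset.sum_sub_distrib,
        ← Finset.sum_add_distrib]
      refine Finset.sum_congr rfl fun j _ => ?_
      rw [hF2 i j]; ring
    have : 2 * Q x = 2 * qForm α x := by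
      rw [h2Q, hexp, hz_left (fun i => a i i), hz_right (fun j => a j j),
        hz_left α, hz_right α, hite, qForm, ← Finset.mul_sum]
      ring
    linarith
  -- positivity
  have hpos : ∀ i, 0 < α i := by
    intro i
    obtain ⟨j, hji, _⟩ := hthird i i
    obtain ⟨k, hki, hkj⟩ := hthird i j
    -- vertex with v i = 0, v j = v k = 1
    have hsub : ({j, k} : Finset (Fin (n+1))) ⊆ univ \ {i} := by
      intro m hm
      simp only [Finset.mem_insert, Finset.mem_singleton] at hm
      simp only [Finset.mem_sdiff, Finset.mem_univ, true_and, Finset.mem_singleton]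
      rcases hm with h | h <;> subst h
      · exact hji
      · exact hki
    have hcard2 : ({j, k} : Finset (Fin (n+1))).card = 2 :=
      Finset.card_pair (fun h => hkj h.symm)
    have hcardA : s ≤ (univ \ ({i} : Finset (Fin (n+1)))).card := by
      rw [Finset.card_sdiff_of_subset (Finset.subset_univ _), Finset.card_univ, Fintype.card_fin]
      simp; omega
    obtain ⟨T, hTsub, hTA, hTcard⟩ := Finset.exists_subsuperset_card_eq
      (n := s - 2 + ({j, k} : Finset (Fin (n+1))).card) hsub (by omega) (by omega)
    have hTs : T.card = s := by omega
    set v : Fin (n+1) → ℝ := fun m => if m ∈ T then (1:ℝ) else 0 with hvdef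
    have hv := hWind T hTs
    have hv01 : ∀ m, v m = 0 ∨ v m = 1 := fun m => hv.1 m
    have hvsum : ∑ m, v m = (s:ℝ) := hv.2
    have hvj : v j = 1 := by
      simp only [hvdef, if_pos (hTsub (by simp : j ∈ ({j,k} : Finset _)))]
    have hvk : v k = 1 := by
      simp only [hvdef, if_pos (hTsub (by simp : k ∈ ({j,k} : Finset _)))]
    have hvi : v i = 0 := by
      have hiT : i ∉ T := fun hiT =>
        (Finset.mem_sdiff.mp (hTA hiT)).2 (Finset.mem_singleton_self i)
      simp only [hvdef, if_neg hiT]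
    set z : Fin (n+1) → ℝ := dd i j + dd i k with hzdef
    have hzvals : ∀ m, z m = (if m = i then (2:ℝ) else 0)
        + (if m = j then (-1:ℝ) else 0) + (if m = k then (-1:ℝ) else 0) := by
      intro m
      simp only [hzdef, Pi.add_apply, dd_apply]
      by_cases hmi : m = i
      · subst hmi; simp [Ne.symm hji, Ne.symm hki]; try norm_num
      · by_cases hmj : m = j
        · subst hmj; simp [hji, Ne.symm hkj]; try norm_num
        · by_cases hmk : m = k
          · subst hmk; simp [hki, hkj]; try norm_num
          · simp [hmi, hmj, hmk]
    have hzsum : ∑ m, z m = 0 := by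
      simp only [hzdef, Pi.add_apply]
      rw [Finset.sum_add_distrib, sum_dd, sum_dd, add_zero]
    set u : Fin (n+1) → ℝ := v + z with hudef
    have hui : u i = 2 := by
      simp only [hudef, Pi.add_apply]
      rw [hzvals i, hvi]; norm_num [Ne.symm hji, Ne.symm hki]
    have huV : u ∈ Vset n s := by
      constructor
      · intro m
        simp only [hudef, Pi.add_apply]
        rw [hzvals m]
        by_cases hmi : m = i
        · subst hmi
          rw [hvi]
          exact ⟨2, by norm_num [Ne.symm hji, Ne.symm hki]⟩
        · by_cases hmj : m = j
          · subst hmj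
            rw [hvj]
            exact ⟨0, by norm_num [hmi, Ne.symm hkj]⟩
          · by_cases hmk : m = k
            · subst hmk
              rw [hvk]
              exact ⟨0, by norm_num [hmi, hmj]⟩
            · rcases hv01 m with h | h <;> rw [h]
              · exact ⟨0, by norm_num [hmi, hmj, hmk]⟩
              · exact ⟨1, by norm_num [hmi, hmj, hmk]⟩
      · simp only [hudef, Pi.add_apply]
        rw [Finset.sum_add_distrib, hvsum, hzsum, add_zero]
    have huW : u ∉ Wset n s := by
      intro hu
      rcases hu.1 i with h | h <;> rw [hui] at h <;> norm_num at h
    have hgtu := hgt u ⟨huV, huW⟩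
    have huc : u - c = (v - c) + z := by funext m; simp [hudef]; ring
    have e1 := hR1 v hv j i hvj hvi
    have e2 := hR1 v hv k i hvk hvi
    have hQz : B a z z = 4 * α i + α j + α k := by
      have hQzq : B a z z = qForm α z := by
        rw [← hQB]; exact him z hzsum
      rw [hQzq, qForm]
      have : ∀ m, α m * (z m) ^ 2 = (if m = i then 4 * α i else 0)
          + (if m = j then α j else 0) + (if m = k then α k else 0) := by
        intro m
        rw [hzvals m]
        by_cases hmi : m = i
        · subst hmi; simp [Ne.symm hji, Ne.symm hki]; try ring
        · by_cases hmj : m = j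
          · subst hmj; simp [hmi, Ne.symm hkj]; try ring
          · by_cases hmk : m = k
            · subst hmk; simp [hmi, hmj]; try ring
            · simp [hmi, hmj, hmk]
      rw [Finset.sum_congr rfl fun m _ => this m]
      rw [Finset.sum_add_distrib, Finset.sum_add_distrib,
        Finset.sum_ite_eq' univ i (fun _ => 4 * α i),
        Finset.sum_ite_eq' univ j (fun _ => α j),
        Finset.sum_ite_eq' univ k (fun _ => α k)]
      simp
      try ring
    rw [huc, hQB, B_add_add a hsym, ← hQB, heq v hv, B_add_right, hQz] at hgtu
    
    have hFij : F i j = α i + α j := hαF i j (Ne.symm hji)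
    have hFik : F i k = α i + α k := hαF i k (Ne.symm hki)
    simp only [hFdef] at hFij hFik
    linarith
  exact ⟨α, hpos, him⟩
end
end

section
/- Let n ≥ 2, 2 ≤ s ≤ n − 1, and α_0, …, α_n > 0. Define C = (s − (n+1)/2)/(Σ_{i=0}^n 1/α_i) and c_α = (1/2 + C/α_0, …, 1/2 + C/α_n). Then: (a) c_α is the unique point c ∈ ℝ^{n+1} with Σ_{i=0}^n c_i = s such that the value q_α(v − c) is the same for all v ∈ W(n+1,s); (b) c_α − h is q_α-orthogonal to the hyperplane {x : Σ_{i=0}^n x_i = 0}, where h = (1/2, …, 1/2), i.e., Σ_{i=0}^n α_i ((c_α)_i − 1/2) y_i = 0 for every y with Σ_{i=0}^n y_i = 0. Hence c_α is the q_α-orthogonal projection of h onto the hyperplane Σ_{i=0}^n x_i = s. -/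
open Finset

noncomputable section

lemma qForm_expand {n : ℕ} (α c v : Fin (n+1) → ℝ) (hv : ∀ i, v i = 0 ∨ v i = 1) :
    qForm α (v - c) = (∑ i, v i * (α i * (1 - 2 * c i))) + qForm α c := by
  unfold qForm
  rw [← Finset.sum_add_distrib]
  refine Finset.sum_congr rfl fun i _ => ?_
  have h : v i ^ 2 = v i := by rcases hv i with h | h <;> simp [h]
  have h2 : (v i - c i) ^ 2 = v i ^ 2 - 2 * v i * c i + c i ^ 2 := by ring
  simp only [Pi.sub_apply]
  rw [h2, h]; ring

lemma indicator_mem_Wset {n s : ℕ} (T : Finset (Fin (n+1))) (hT : T.card = s) :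
    (fun k => if k ∈ T then (1:ℝ) else 0) ∈ Wset n s := by
  constructor
  · intro i; by_cases h : i ∈ T <;> simp [h]
  · rw [Finset.sum_ite_mem, Finset.univ_inter, Finset.sum_const, hT]
    simp

lemma indSum {n : ℕ} (T : Finset (Fin (n+1))) (β : Fin (n+1) → ℝ) :
    ∑ k, (if k ∈ T then (1:ℝ) else 0) * β k = ∑ k ∈ T, β k := by
  simp only [ite_mul, one_mul, zero_mul]
  rw [Finset.sum_ite_mem, Finset.univ_inter]

/-- `c_α` is the unique point of the hyperplane `Σ x_i = s` equidistant (for `q_α`)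
from all points of `W(n+1,s)`, and `c_α − (1/2,…,1/2)` is `q_α`-orthogonal to the
hyperplane `Σ x_i = 0`; i.e. `c_α` is the `q_α`-orthogonal projection of
`h = (1/2,…,1/2)` onto the hyperplane `Σ x_i = s`. -/
theorem circumcenter_is_projection (n s : ℕ) (hn : 2 ≤ n) (hs : 2 ≤ s)
    (hsn : s + 1 ≤ n) (α : Fin (n+1) → ℝ) (hα : ∀ i, 0 < α i) :
    let C : ℝ := ((s : ℝ) - ((n : ℝ) + 1) / 2) / (∑ i, (α i)⁻¹)
    let cα : Fin (n+1) → ℝ := fun i => 1 / 2 + C / α i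
    -- (a) `c_α` is the unique equidistant point on the hyperplane `Σ x_i = s`
    ((∑ i, cα i = (s : ℝ)) ∧
     (∃ r : ℝ, ∀ v ∈ Wset n s, qForm α (v - cα) = r) ∧
     (∀ c : Fin (n+1) → ℝ, ∑ i, c i = (s : ℝ) →
        (∃ r : ℝ, ∀ v ∈ Wset n s, qForm α (v - c) = r) → c = cα)) ∧
    -- (b) `c_α − h` is `q_α`-orthogonal to the hyperplane `Σ x_i = 0`
    (∀ y : Fin (n+1) → ℝ, ∑ i, y i = 0 →
        ∑ i, α i * (cα i - 1 / 2) * y i = 0) := by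
  intro C cα
  have hα0 : ∀ i, α i ≠ 0 := fun i => (hα i).ne'
  have hS : (0 : ℝ) < ∑ i, (α i)⁻¹ :=
    Finset.sum_pos (fun i _ => inv_pos.2 (hα i)) Finset.univ_nonempty
  have hSne : (∑ i, (α i)⁻¹) ≠ 0 := hS.ne'
  have hCS : C * (∑ i, (α i)⁻¹) = (s : ℝ) - ((n : ℝ) + 1) / 2 :=
    div_mul_cancel₀ _ hSne
  -- sum of cα
  have hsum : ∑ i, cα i = (s : ℝ) := by
    have : ∑ i, cα i = (∑ i : Fin (n+1), (1:ℝ)/2) + C * ∑ i, (α i)⁻¹ := by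
      rw [Finset.mul_sum, ← Finset.sum_add_distrib]
      refine Finset.sum_congr rfl fun i _ => ?_
      show (1:ℝ)/2 + C / α i = 1/2 + C * (α i)⁻¹
      rw [div_eq_mul_inv C]
    rw [this, hCS, Finset.sum_const, Finset.card_univ, Fintype.card_fin]
    push_cast
    ring
  -- key coefficient computation
  have hcoef : ∀ i, α i * (1 - 2 * cα i) = -2 * C := by
    intro i
    have hai := hα0 i
    show α i * (1 - 2 * (1 / 2 + C / α i)) = -2 * C
    field_simp
    ring
  refine ⟨⟨hsum, ⟨-2 * C * s + qForm α cα, ?_⟩, ?_⟩, ?_⟩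
  · -- equidistance
    rintro v ⟨hv01, hvs⟩
    rw [qForm_expand α cα v hv01]
    congr 1
    calc ∑ i, v i * (α i * (1 - 2 * cα i)) = ∑ i, v i * (-2 * C) := by
          refine Finset.sum_congr rfl fun i _ => by rw [hcoef i]
      _ = (∑ i, v i) * (-2 * C) := by rw [← Finset.sum_mul]
      _ = -2 * C * s := by rw [hvs]; ring
  · -- uniqueness
    rintro c hcs ⟨r, hr⟩
    set β : Fin (n+1) → ℝ := fun i => α i * (1 - 2 * c i) with hβ
    have hsumT : ∀ T : Finset (Fin (n+1)), T.card = s → ∑ k ∈ T, β k = r - qForm α c := by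
      intro T hT
      have := hr _ (indicator_mem_Wset T hT)
      rw [qForm_expand α c _ (fun i => by by_cases h : i ∈ T <;> simp [h]),
        indSum] at this
      linarith
    have hβconst : ∀ i j, β i = β j := by
      intro i j
      rcases eq_or_ne i j with rfl | hij
      · rfl
      · obtain ⟨T₀, hT₀sub, hT₀card⟩ := Finset.exists_subset_card_eq
          (s := (Finset.univ : Finset (Fin (n+1))) \ {i, j}) (n := s - 1) (by
            rw [Finset.card_sdiff_of_subset (Finset.subset_univ _), Finset.card_univ,
              Fintype.card_fin, Finset.card_pair hij]
            omega)
        have hiT₀ : i ∉ T₀ := fun h => by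
          have := hT₀sub h; simp at this
        have hjT₀ : j ∉ T₀ := fun h => by
          have := hT₀sub h; simp at this
        have hc1 : (insert i T₀).card = s := by
          rw [Finset.card_insert_of_notMem hiT₀]; omega
        have hc2 : (insert j T₀).card = s := by
          rw [Finset.card_insert_of_notMem hjT₀]; omega
        have h1 : ∑ k ∈ insert i T₀, β k = r - qForm α c := hsumT _ hc1
        have h2 : ∑ k ∈ insert j T₀, β k = r - qForm α c := hsumT _ hc2
        rw [Finset.sum_insert hiT₀] at h1
        rw [Finset.sum_insert hjT₀] at h2
        linarith
    set b : ℝ := β 0 with hb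
    have hci : ∀ i, c i = 1 / 2 - (b / 2) * (α i)⁻¹ := by
      intro i
      have h1 : α i * (1 - 2 * c i) = b := (hβconst i 0)
      have hai := hα0 i
      field_simp
      linear_combination -h1
    have hsb : (s : ℝ) = ((n : ℝ) + 1) / 2 - (b / 2) * ∑ i, (α i)⁻¹ := by
      rw [← hcs]
      rw [Finset.mul_sum]
      calc ∑ i, c i = ∑ i, ((1:ℝ)/2 - (b/2) * (α i)⁻¹) :=
            Finset.sum_congr rfl fun i _ => hci i
        _ = (∑ i : Fin (n+1), (1:ℝ)/2) - ∑ i, (b/2) * (α i)⁻¹ := by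
            rw [Finset.sum_sub_distrib]
        _ = ((n:ℝ)+1)/2 - ∑ i, (b/2) * (α i)⁻¹ := by
            rw [Finset.sum_const, Finset.card_univ, Fintype.card_fin]; push_cast; ring
    have hbC : b / 2 = -C := by
      have h1 : (b / 2) * ∑ i, (α i)⁻¹ = -(C * ∑ i, (α i)⁻¹) := by
        rw [hCS]; linarith
      have := mul_right_cancel₀ hSne (by rw [h1]; ring : (b/2) * ∑ i, (α i)⁻¹ = (-C) * ∑ i, (α i)⁻¹)
      exact this
    funext i
    rw [hci i, hbC]
    show _ = 1 / 2 + C / α i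
    rw [div_eq_mul_inv]
    ring
  · -- orthogonality
    intro y hy
    have : ∀ i, α i * (cα i - 1 / 2) * y i = C * y i := by
      intro i
      have hai := hα0 i
      show α i * (1 / 2 + C / α i - 1 / 2) * y i = C * y i
      field_simp
      ring
    calc ∑ i, α i * (cα i - 1 / 2) * y i = ∑ i, C * y i :=
          Finset.sum_congr rfl fun i _ => this i
      _ = C * ∑ i, y i := by rw [Finset.mul_sum]
      _ = 0 := by rw [hy, mul_zero]
end
end

section
/- Let n, s ∈ ℤ with s ≥ 2 and 4s ≤ n + 1. Then: (a) the difference set V²_{n,s} − V²_{n,s} = {u − u' : u, u' ∈ V²_{n,s}} is an additive subgroup of ℝ^{n+1} (so V²_{n,s} is a translate of a lattice), and it equals A_n ∪ (t_{n,s} + A_n); (b) the additive subgroup of ℝ^{n+1} generated by {v − w : v, w ∈ S(n,s)} equals V²_{n,s} − V²_{n,s}, i.e., the polytope P(n,s) affinely generates V²_{n,s}. -/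
open Finset

noncomputable section

/-- The vector `v_{n,s} = ((1/4)^{4s}; 0^{n+1-4s})`. -/
def vns (n s : ℕ) : Fin (n+1) → ℝ := fun i => if (i : ℕ) < 4 * s then 1 / 4 else 0

/-- The vector `t_{n,s} = ((1/2)^{2s}; (−1/2)^{2s}; 0^{n+1-4s})`. -/
def tns (n s : ℕ) : Fin (n+1) → ℝ := fun i =>
  if (i : ℕ) < 2 * s then 1 / 2 else if (i : ℕ) < 4 * s then -(1 / 2) else 0

/-- The point lattice `V²_{n,s} = V_{n,s} ∪ (t_{n,s} + V_{n,s})`. -/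
def V2 (n s : ℕ) : Set (Fin (n+1) → ℝ) :=
  Vset n s ∪ (fun x => tns n s + x) '' Vset n s

/-- The vertex set `S(n,s) = W(n+1,s) ∪ {2v_{n,s} − v : v ∈ W(n+1,s)}`
of the polytope `P(n,s)`. -/
def Sns (n s : ℕ) : Set (Fin (n+1) → ℝ) :=
  Wset n s ∪ (fun v => (2 : ℝ) • vns n s - v) '' Wset n s

/-- The quadratic form `q_{n,s}(x) = 2 Σ_{i<4s} x_i² + Σ_{i≥4s} x_i²`. -/
def qns (n s : ℕ) (x : Fin (n+1) → ℝ) : ℝ :=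
  ∑ i : Fin (n+1), (if (i : ℕ) < 4 * s then (2:ℝ) else 1) * (x i) ^ 2

-- ### Auxiliary lemmas

lemma isInt_add {x y : ℝ} (hx : ∃ m:ℤ, x = m) (hy : ∃ m:ℤ, y = m) : ∃ m:ℤ, x + y = m := by
  obtain ⟨a, rfl⟩ := hx; obtain ⟨b, rfl⟩ := hy; exact ⟨a+b, by push_cast; ring⟩

lemma isInt_neg {x : ℝ} (hx : ∃ m:ℤ, x = m) : ∃ m:ℤ, -x = m := by
  obtain ⟨a, rfl⟩ := hx; exact ⟨-a, by push_cast; ring⟩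

lemma isInt_sub {x y : ℝ} (hx : ∃ m:ℤ, x = m) (hy : ∃ m:ℤ, y = m) : ∃ m:ℤ, x - y = m := by
  obtain ⟨a, rfl⟩ := hx; obtain ⟨b, rfl⟩ := hy; exact ⟨a-b, by push_cast; ring⟩

lemma sum_ite_lt (N c : ℕ) (h : c ≤ N) (r : ℝ) :
    ∑ i : Fin N, (if (i:ℕ) < c then r else 0) = c * r := by
  rw [Fin.sum_univ_eq_sum_range (fun i => if i < c then r else 0), ← Finset.sum_filter]
  have h2 : (Finset.range N).filter (· < c) = Finset.range c := by
    ext x; simp only [Finset.mem_filter, Finset.mem_range]; omega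
  rw [h2, Finset.sum_const, Finset.card_range, nsmul_eq_mul]

lemma sum_tns (n s : ℕ) (h4 : 4 * s ≤ n + 1) : ∑ i, tns n s i = 0 := by
  have he : ∀ i : Fin (n+1), tns n s i =
      (if (i:ℕ) < 2*s then (1:ℝ) else 0) + (if (i:ℕ) < 4*s then (-(1/2):ℝ) else 0) := by
    intro i; unfold tns; split_ifs <;> first | (exfalso; omega) | norm_num
  rw [Finset.sum_congr rfl (fun i _ => he i), Finset.sum_add_distrib,
    sum_ite_lt _ _ (by omega), sum_ite_lt _ _ h4]
  push_cast; ring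

lemma sum_vns (n s : ℕ) (h4 : 4 * s ≤ n + 1) : ∑ i, vns n s i = (s:ℝ) := by
  unfold vns
  rw [sum_ite_lt _ _ h4]; push_cast; ring

lemma latA_add {n : ℕ} {a b : Fin (n+1) → ℝ} (ha : a ∈ latticeA n) (hb : b ∈ latticeA n) :
    a + b ∈ latticeA n :=
  ⟨fun i => isInt_add (ha.1 i) (hb.1 i), by
    simp only [Pi.add_apply, Finset.sum_add_distrib, ha.2, hb.2, add_zero]⟩

lemma latA_neg {n : ℕ} {a : Fin (n+1) → ℝ} (ha : a ∈ latticeA n) : -a ∈ latticeA n :=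
  ⟨fun i => isInt_neg (ha.1 i), by
    simp only [Pi.neg_apply, Finset.sum_neg_distrib, ha.2, neg_zero]⟩

lemma latA_sub {n : ℕ} {a b : Fin (n+1) → ℝ} (ha : a ∈ latticeA n) (hb : b ∈ latticeA n) :
    a - b ∈ latticeA n := by
  rw [sub_eq_add_neg]; exact latA_add ha (latA_neg hb)

lemma twoT_mem (n s : ℕ) (h4 : 4 * s ≤ n + 1) : tns n s + tns n s ∈ latticeA n := by
  constructor
  · intro i
    simp only [Pi.add_apply]
    unfold tns
    split_ifs <;>
      first
        | (exfalso; omega)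
        | (refine ⟨1, ?_⟩; norm_num; done)
        | (refine ⟨-1, ?_⟩; norm_num; done)
        | (refine ⟨0, ?_⟩; norm_num; done)
  · simp only [Pi.add_apply, Finset.sum_add_distrib, sum_tns n s h4, add_zero]

lemma Vsub {n s : ℕ} {u u' : Fin (n+1) → ℝ} (hu : u ∈ Vset n s) (hu' : u' ∈ Vset n s) :
    u - u' ∈ latticeA n :=
  ⟨fun i => isInt_sub (hu.1 i) (hu'.1 i), by
    simp only [Pi.sub_apply, Finset.sum_sub_distrib, hu.2, hu'.2, sub_self]⟩

lemma latV_add {n s : ℕ} {a v : Fin (n+1) → ℝ} (ha : a ∈ latticeA n) (hv : v ∈ Vset n s) :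
    a + v ∈ Vset n s :=
  ⟨fun i => isInt_add (ha.1 i) (hv.1 i), by
    simp only [Pi.add_apply, Finset.sum_add_distrib, ha.2, hv.2, zero_add]⟩

lemma W_sub_V {n s : ℕ} {v : Fin (n+1) → ℝ} (hv : v ∈ Wset n s) : v ∈ Vset n s :=
  ⟨fun i => by rcases hv.1 i with h | h
               exacts [⟨0, by rw [h]; norm_num⟩, ⟨1, by rw [h]; norm_num⟩], hv.2⟩

lemma keyV {n s : ℕ} (h4 : 4 * s ≤ n + 1) {v : Fin (n+1) → ℝ} (hv : v ∈ Wset n s) :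
    (2:ℝ) • vns n s - tns n s - v ∈ Vset n s := by
  constructor
  · intro i
    simp only [Pi.sub_apply, Pi.smul_apply, smul_eq_mul]
    simp only [vns, tns]
    rcases hv.1 i with h | h <;> rw [h] <;> split_ifs <;>
      first
        | (exfalso; omega)
        | (refine ⟨0, ?_⟩; norm_num; done)
        | (refine ⟨1, ?_⟩; norm_num; done)
        | (refine ⟨-1, ?_⟩; norm_num; done)
  · simp only [Pi.sub_apply, Pi.smul_apply, smul_eq_mul]
    rw [Finset.sum_sub_distrib, Finset.sum_sub_distrib, ← Finset.mul_sum,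
      sum_vns n s h4, sum_tns n s h4, hv.2]
    ring

/-- The subgroup `A_n ∪ (t_{n,s} + A_n)`. -/
def Gsub (n s : ℕ) (h4 : 4 * s ≤ n + 1) : AddSubgroup (Fin (n+1) → ℝ) where
  carrier := latticeA n ∪ (fun x => tns n s + x) '' latticeA n
  zero_mem' := Or.inl ⟨fun i => ⟨0, by simp⟩, by simp⟩
  add_mem' := by
    rintro a b (ha | ⟨a', ha', rfl⟩) (hb | ⟨b', hb', rfl⟩)
    · exact Or.inl (latA_add ha hb)
    · exact Or.inr ⟨a + b', latA_add ha hb', by funext i; simp only [Pi.add_apply, Pi.sub_apply, Pi.neg_apply]; ring⟩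
    · exact Or.inr ⟨a' + b, latA_add ha' hb, by funext i; simp only [Pi.add_apply, Pi.sub_apply, Pi.neg_apply]; ring⟩
    · refine Or.inl ?_
      have h : (tns n s + a') + (tns n s + b') = ((tns n s + tns n s) + a') + b' := by abel
      rw [h]
      exact latA_add (latA_add (twoT_mem n s h4) ha') hb'
  neg_mem' := by
    rintro a (ha | ⟨a', ha', rfl⟩)
    · exact Or.inl (latA_neg ha)
    · exact Or.inr ⟨-(tns n s + tns n s) - a',
        latA_sub (latA_neg (twoT_mem n s h4)) ha', by funext i; simp only [Pi.add_apply, Pi.sub_apply, Pi.neg_apply]; ring⟩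

/-- Indicator of the first `s` coordinates. -/
def chiS (n s : ℕ) : Fin (n+1) → ℝ := fun i => if (i:ℕ) < s then 1 else 0

lemma chiS_mem_W (n s : ℕ) (h4 : 4 * s ≤ n + 1) : chiS n s ∈ Wset n s := by
  constructor
  · intro i; unfold chiS; split_ifs
    exacts [Or.inr rfl, Or.inl rfl]
  · unfold chiS; rw [sum_ite_lt _ _ (by omega)]; ring

lemma chiS_mem_V (n s : ℕ) (h4 : 4 * s ≤ n + 1) : chiS n s ∈ Vset n s :=
  W_sub_V (chiS_mem_W n s h4)

lemma D_eq (n s : ℕ) (h4 : 4 * s ≤ n + 1) :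
    {x | ∃ u ∈ V2 n s, ∃ u' ∈ V2 n s, x = u - u'}
      = latticeA n ∪ (fun x => tns n s + x) '' latticeA n := by
  apply Set.Subset.antisymm
  · rintro x ⟨u, hu, u', hu', rfl⟩
    rcases hu with hu | ⟨a, ha, rfl⟩ <;> rcases hu' with hu' | ⟨a', ha', rfl⟩
    · exact Or.inl (Vsub hu hu')
    · refine Or.inr ⟨u - a' - (tns n s + tns n s),
        latA_sub (Vsub hu ha') (twoT_mem n s h4), by funext i; simp only [Pi.add_apply, Pi.sub_apply, Pi.neg_apply]; ring⟩
    · exact Or.inr ⟨a - u', Vsub ha hu', by funext i; simp only [Pi.add_apply, Pi.sub_apply, Pi.neg_apply]; ring⟩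
    · refine Or.inl ?_
      have h : (tns n s + a) - (tns n s + a') = a - a' := by abel
      rw [h]; exact Vsub ha ha'
  · rintro x (hx | ⟨a, ha, rfl⟩)
    · exact ⟨x + chiS n s, Or.inl (latV_add hx (chiS_mem_V n s h4)),
        chiS n s, Or.inl (chiS_mem_V n s h4), by abel⟩
    · exact ⟨tns n s + (a + chiS n s),
        Or.inr ⟨a + chiS n s, latV_add ha (chiS_mem_V n s h4), rfl⟩,
        chiS n s, Or.inl (chiS_mem_V n s h4), by abel⟩

lemma S_sub_V2 {n s : ℕ} (h4 : 4 * s ≤ n + 1) : Sns n s ⊆ V2 n s := by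
  rintro x (hx | ⟨v, hv, rfl⟩)
  · exact Or.inl (W_sub_V hx)
  · exact Or.inr ⟨(2:ℝ) • vns n s - tns n s - v, keyV h4 hv, by abel⟩

lemma chiT_mem_W (n s : ℕ) (T : Finset (Fin (n+1))) (hT : T.card = s) :
    (fun k => if k ∈ T then (1:ℝ) else 0) ∈ Wset n s := by
  constructor
  · intro i; dsimp only; split_ifs <;> simp
  · simp only [Finset.sum_boole]
    rw [Finset.filter_mem_eq_inter, Finset.univ_inter, hT]

lemma single_diff_mem (n s : ℕ) (hs : 2 ≤ s) (h4 : 4 * s ≤ n + 1) (i j : Fin (n+1)) :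
    (Pi.single i (1:ℝ) - Pi.single j 1) ∈
      AddSubgroup.closure {x : Fin (n+1) → ℝ | ∃ v ∈ Sns n s, ∃ w ∈ Sns n s, x = v - w} := by
  rcases eq_or_ne i j with rfl | hij
  · simp only [sub_self]; exact zero_mem _
  · have hcard : ((univ.erase i).erase j).card = n - 1 := by
      rw [Finset.card_erase_of_mem (by simp [hij.symm]), Finset.card_erase_of_mem (by simp)]
      simp
    have hn : s - 1 ≤ ((univ.erase i).erase j).card := by rw [hcard]; omega
    obtain ⟨t, hts, htcard⟩ := Finset.exists_subset_card_eq hn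
    have hjt : j ∉ t := fun h => by simpa using (hts h)
    have hit : i ∉ t := fun h => by
      have := hts h; simp only [Finset.mem_erase] at this
      exact absurd this.2.1 (by simp)
    set T : Finset (Fin (n+1)) := insert j t with hT
    have hjT : j ∈ T := Finset.mem_insert_self _ _
    have hiT : i ∉ T := by
      simp only [hT, Finset.mem_insert]
      push_neg; exact ⟨hij, hit⟩
    have hTcard : T.card = s := by
      rw [hT, Finset.card_insert_of_notMem hjt, htcard]; omega
    set T' : Finset (Fin (n+1)) := insert i (T.erase j) with hT'
    have hiTe : i ∉ T.erase j := fun h => hiT (Finset.mem_of_mem_erase h)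
    have hT'card : T'.card = s := by
      rw [hT', Finset.card_insert_of_notMem hiTe, Finset.card_erase_of_mem hjT, hTcard]
      omega
    have h1 := chiT_mem_W n s T hTcard
    have h2 := chiT_mem_W n s T' hT'card
    have heq : (fun k => if k ∈ T' then (1:ℝ) else 0) - (fun k => if k ∈ T then (1:ℝ) else 0)
        = Pi.single i 1 - Pi.single j 1 := by
      funext k
      simp only [Pi.sub_apply, Pi.single_apply]
      by_cases hki : k = i
      · subst hki
        have h3 : k ∈ T' := Finset.mem_insert_self _ _
        simp [h3, hiT, hij]
      · by_cases hkj : k = j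
        · subst hkj
          have h4 : k ∉ T' := by
            simp only [hT', Finset.mem_insert, Finset.mem_erase]
            push_neg
            exact ⟨hki, fun h => absurd rfl h⟩
          simp [h4, hjT, hki]
        · have h5 : k ∈ T' ↔ k ∈ T := by
            simp only [hT', Finset.mem_insert, Finset.mem_erase]
            constructor
            · rintro (h | h); · exact absurd h hki
              exact h.2
            · intro h; exact Or.inr ⟨hkj, h⟩
          by_cases hkT : k ∈ T <;> simp [h5, hkT, hki, hkj]
    rw [← heq]
    exact AddSubgroup.subset_closure ⟨_, Or.inl h2, _, Or.inl h1, rfl⟩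

lemma latA_mem_closure (n s : ℕ) (hs : 2 ≤ s) (h4 : 4 * s ≤ n + 1)
    {a : Fin (n+1) → ℝ} (ha : a ∈ latticeA n) :
    a ∈ AddSubgroup.closure {x : Fin (n+1) → ℝ | ∃ v ∈ Sns n s, ∃ w ∈ Sns n s, x = v - w} := by
  choose m hm using ha.1
  have hsum : ∑ i, (m i : ℝ) = 0 := by
    rw [← ha.2]; exact Finset.sum_congr rfl fun i _ => (hm i).symm
  set f : Fin (n+1) → (Fin (n+1) → ℝ) :=
    fun i => Pi.single i (1:ℝ) - Pi.single (0 : Fin (n+1)) 1 with hf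
  have key : a = ∑ i, m i • f i := by
    funext j
    rw [Finset.sum_apply]
    have hterm : ∀ i : Fin (n+1), (m i • f i) j
        = (if j = i then (m i : ℝ) else 0) - (m i : ℝ) * (if j = 0 then 1 else 0) := by
      intro i
      simp only [hf, Pi.smul_apply, Pi.sub_apply, Pi.single_apply, zsmul_eq_mul]
      split_ifs <;> ring
    rw [Finset.sum_congr rfl fun i _ => hterm i, Finset.sum_sub_distrib]
    have e1 : ∑ i : Fin (n+1), (if j = i then (m i : ℝ) else 0) = (m j : ℝ) := by
      rw [Finset.sum_ite_eq]; simp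
    have e2 : ∑ i : Fin (n+1), (m i : ℝ) * (if j = 0 then 1 else 0) = 0 := by
      rw [← Finset.sum_mul, hsum, zero_mul]
    rw [e1, e2, sub_zero, hm j]
  rw [key]
  exact AddSubgroup.sum_mem _ fun i _ =>
    AddSubgroup.zsmul_mem _ (single_diff_mem n s hs h4 i 0) _

/-- (a) The difference set `V²_{n,s} − V²_{n,s}` is a lattice, equal to
`A_n ∪ (t_{n,s} + A_n)`; (b) the polytope `P(n,s)` affinely generates `V²_{n,s}`:
the subgroup generated by differences of its vertices is `V²_{n,s} − V²_{n,s}`. -/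
theorem Pns_generates_V2 (n s : ℕ) (hs : 2 ≤ s) (h4s : 4 * s ≤ n + 1) :
    (∃ G : AddSubgroup (Fin (n+1) → ℝ),
        (G : Set (Fin (n+1) → ℝ)) = {x | ∃ u ∈ V2 n s, ∃ u' ∈ V2 n s, x = u - u'} ∧
        (G : Set (Fin (n+1) → ℝ)) = latticeA n ∪ (fun x => tns n s + x) '' latticeA n) ∧
    (AddSubgroup.closure {x : Fin (n+1) → ℝ | ∃ v ∈ Sns n s, ∃ w ∈ Sns n s, x = v - w}
        : Set (Fin (n+1) → ℝ))
      = {x | ∃ u ∈ V2 n s, ∃ u' ∈ V2 n s, x = u - u'} := by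
  have hDeq := D_eq n s h4s
  constructor
  · exact ⟨Gsub n s h4s, hDeq.symm, rfl⟩
  · rw [hDeq]
    apply Set.Subset.antisymm
    · have hle : AddSubgroup.closure
          {x : Fin (n+1) → ℝ | ∃ v ∈ Sns n s, ∃ w ∈ Sns n s, x = v - w} ≤ Gsub n s h4s := by
        rw [AddSubgroup.closure_le]
        rintro x ⟨v, hv, w, hw, rfl⟩
        have : v - w ∈ {x | ∃ u ∈ V2 n s, ∃ u' ∈ V2 n s, x = u - u'} :=
          ⟨v, S_sub_V2 h4s hv, w, S_sub_V2 h4s hw, rfl⟩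
        rw [hDeq] at this
        exact this
      exact hle
    · rintro x (hx | ⟨a, ha, rfl⟩)
      · exact latA_mem_closure n s hs h4s hx
      · -- the coset `t_{n,s} + A_n`
        have hχW := chiS_mem_W n s h4s
        have hz : ((2:ℝ) • vns n s - chiS n s) - chiS n s ∈
            AddSubgroup.closure
              {x : Fin (n+1) → ℝ | ∃ v ∈ Sns n s, ∃ w ∈ Sns n s, x = v - w} :=
          AddSubgroup.subset_closure
            ⟨_, Or.inr ⟨chiS n s, hχW, rfl⟩, _, Or.inl hχW, rfl⟩
        have hb : ((2:ℝ) • vns n s - tns n s - chiS n s) - chiS n s ∈ latticeA n :=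
          Vsub (keyV h4s hχW) (W_sub_V hχW)
        have hab : a - (((2:ℝ) • vns n s - tns n s - chiS n s) - chiS n s) ∈ latticeA n :=
          latA_sub ha hb
        have hmem := AddSubgroup.add_mem _ hz (latA_mem_closure n s hs h4s hab)
        have heq : (((2:ℝ) • vns n s - chiS n s) - chiS n s)
            + (a - (((2:ℝ) • vns n s - tns n s - chiS n s) - chiS n s)) = tns n s + a := by
          abel
        rw [heq] at hmem
        exact hmem
end
end

section
/- Let n, s ∈ ℤ with s ≥ 2 and 4s ≤ n + 1. Then q_{n,s}(v − v_{n,s}) = 3s/2 for every v ∈ S(n,s), and q_{n,s}(u − v_{n,s}) > 3s/2 for every u ∈ V²_{n,s} \ S(n,s). That is, P(n,s) is a Delaunay polytope of V²_{n,s} with respect to q_{n,s}, with center of the circumscribed ellipsoid v_{n,s} and squared radius 3s/2. -/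
open Finset

noncomputable section

/-! ### Auxiliary lemmas -/

lemma sum_ite_lt_const (n k : ℕ) (h : k ≤ n+1) (c : ℝ) :
    ∑ i : Fin (n+1), (if (i:ℕ) < k then c else 0) = k * c := by
  rw [Fin.sum_univ_eq_sum_range (fun i => if i < k then c else 0)]
  rw [Finset.sum_ite, Finset.sum_const, Finset.sum_const, smul_zero, add_zero]
  have : Finset.filter (fun i => i < k) (Finset.range (n+1)) = Finset.range k := by
    ext i; simp; omega
  rw [this, Finset.card_range]; simp [mul_comm]

lemma int_mul_sub_one_nonneg {y : ℝ} (h : ∃ m : ℤ, y = m) : 0 ≤ y * (y - 1) := by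
  obtain ⟨m, rfl⟩ := h
  rcases le_or_gt m 0 with h1 | h1
  · have h2 : (m:ℝ) ≤ 0 := by exact_mod_cast h1
    nlinarith
  · have h2 : (1:ℝ) ≤ (m:ℝ) := by exact_mod_cast h1
    nlinarith

lemma int_mul_add_one_nonneg {y : ℝ} (h : ∃ m : ℤ, y = m) : 0 ≤ y * (y + 1) := by
  obtain ⟨m, rfl⟩ := h
  rcases le_or_gt m (-1) with h1 | h1
  · have h2 : (m:ℝ) ≤ -1 := by exact_mod_cast h1
    nlinarith
  · have h2 : (0:ℝ) ≤ (m:ℝ) := by exact_mod_cast h1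
    nlinarith

lemma int_mul_sub_one_pos {y : ℝ} (h : ∃ m : ℤ, y = m) (h0 : y ≠ 0) (h1 : y ≠ 1) :
    0 < y * (y - 1) := by
  obtain ⟨m, rfl⟩ := h
  have hm0 : m ≠ 0 := by rintro rfl; simp at h0
  have hm1 : m ≠ 1 := by rintro rfl; simp at h1
  rcases (by omega : m ≤ -1 ∨ 2 ≤ m) with h2 | h2
  · have h3 : (m:ℝ) ≤ -1 := by exact_mod_cast h2
    nlinarith
  · have h3 : (2:ℝ) ≤ (m:ℝ) := by exact_mod_cast h2
    nlinarith

lemma int_mul_add_one_pos {y : ℝ} (h : ∃ m : ℤ, y = m) (h0 : y ≠ 0) (h1 : y ≠ -1) :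
    0 < y * (y + 1) := by
  obtain ⟨m, rfl⟩ := h
  have hm0 : m ≠ 0 := by rintro rfl; simp at h0
  have hm1 : m ≠ -1 := by rintro rfl; simp at h1
  rcases (by omega : m ≤ -2 ∨ 1 ≤ m) with h2 | h2
  · have h3 : (m:ℝ) ≤ -2 := by exact_mod_cast h2
    nlinarith
  · have h3 : (1:ℝ) ≤ (m:ℝ) := by exact_mod_cast h2
    nlinarith

/-- The error term for points of `V_{n,s}`. -/
def eA (n s : ℕ) (x : Fin (n+1) → ℝ) (i : Fin (n+1)) : ℝ :=
  (if (i:ℕ) < 4 * s then (2:ℝ) else 1) * (x i * (x i - 1))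

/-- The error term for points of `t_{n,s} + V_{n,s}`. -/
def eB (n s : ℕ) (x : Fin (n+1) → ℝ) (i : Fin (n+1)) : ℝ :=
  if (i:ℕ) < 2 * s then 2 * (x i * (x i + 1))
  else if (i:ℕ) < 4 * s then 2 * (x i * (x i - 1))
  else x i * (x i + 1)

lemma qns_ident_A (n s : ℕ) (h4s : 4 * s ≤ n + 1) (x : Fin (n+1) → ℝ)
    (hsum : ∑ i, x i = (s:ℝ)) :
    qns n s (x - vns n s) = 3 * (s:ℝ) / 2 + ∑ i, eA n s x i := by
  have key : ∀ i : Fin (n+1),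
      (if (i:ℕ) < 4 * s then (2:ℝ) else 1) * ((x - vns n s) i) ^ 2
        = x i + (if (i:ℕ) < 4 * s then (1/8 : ℝ) else 0) + eA n s x i := by
    intro i
    simp only [Pi.sub_apply, vns, eA]
    by_cases h : (i:ℕ) < 4 * s <;> simp [h] <;> ring
  rw [qns]
  rw [Finset.sum_congr rfl (fun i _ => key i)]
  rw [Finset.sum_add_distrib, Finset.sum_add_distrib, hsum,
    sum_ite_lt_const n (4*s) h4s (1/8)]
  push_cast
  ring

lemma qns_ident_B (n s : ℕ) (h4s : 4 * s ≤ n + 1) (x : Fin (n+1) → ℝ)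
    (hsum : ∑ i, x i = (s:ℝ)) :
    qns n s (tns n s + x - vns n s) = 3 * (s:ℝ) / 2 + ∑ i, eB n s x i := by
  have key : ∀ i : Fin (n+1),
      (if (i:ℕ) < 4 * s then (2:ℝ) else 1) * ((tns n s + x - vns n s) i) ^ 2
        = -x i + ((if (i:ℕ) < 4 * s then (9/8 : ℝ) else 0)
            + (if (i:ℕ) < 2 * s then (-1 : ℝ) else 0)) + eB n s x i := by
    intro i
    simp only [Pi.sub_apply, Pi.add_apply, vns, tns, eB]
    by_cases h2 : (i:ℕ) < 2 * s
    · have h4 : (i:ℕ) < 4 * s := by omega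
      simp only [h2, h4, if_true]; ring
    · by_cases h4 : (i:ℕ) < 4 * s
      · simp only [h2, h4, if_true, if_false]; ring
      · simp only [h2, h4, if_false]; ring
  rw [qns]
  rw [Finset.sum_congr rfl (fun i _ => key i)]
  rw [Finset.sum_add_distrib, Finset.sum_add_distrib, Finset.sum_add_distrib,
    Finset.sum_neg_distrib, hsum, sum_ite_lt_const n (4*s) h4s (9/8),
    sum_ite_lt_const n (2*s) (by omega) (-1)]
  push_cast
  ring

lemma eA_nonneg (n s : ℕ) (x : Fin (n+1) → ℝ) (hx : ∀ i, ∃ m : ℤ, x i = m)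
    (i : Fin (n+1)) : 0 ≤ eA n s x i := by
  have h := int_mul_sub_one_nonneg (hx i)
  unfold eA
  split <;> nlinarith

lemma eB_nonneg (n s : ℕ) (x : Fin (n+1) → ℝ) (hx : ∀ i, ∃ m : ℤ, x i = m)
    (i : Fin (n+1)) : 0 ≤ eB n s x i := by
  have h1 := int_mul_sub_one_nonneg (hx i)
  have h2 := int_mul_add_one_nonneg (hx i)
  unfold eB
  split
  · nlinarith
  · split
    · nlinarith
    · exact h2

/-- `P(n,s)` is a Delaunay polytope of `V²_{n,s}` with respect to `q_{n,s}`,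
with center of the circumscribed ellipsoid `v_{n,s}` and squared radius `3s/2`. -/
theorem Pns_delaunay_in_V2 (n s : ℕ) (hs : 2 ≤ s) (h4s : 4 * s ≤ n + 1) :
    (∀ v ∈ Sns n s, qns n s (v - vns n s) = 3 * (s : ℝ) / 2) ∧
    (∀ u ∈ V2 n s \ Sns n s, 3 * (s : ℝ) / 2 < qns n s (u - vns n s)) := by
  -- value on W
  have hW : ∀ w ∈ Wset n s, qns n s (w - vns n s) = 3 * (s:ℝ) / 2 := by
    intro w hw
    obtain ⟨hw01, hwsum⟩ := hw
    rw [qns_ident_A n s h4s w hwsum]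
    have : ∀ i : Fin (n+1), eA n s w i = 0 := by
      intro i
      unfold eA
      rcases hw01 i with h | h <;> rw [h] <;> ring_nf <;> simp
    rw [Finset.sum_congr rfl (fun i _ => this i), Finset.sum_const, smul_zero, add_zero]
  constructor
  · rintro v (hv | ⟨w, hw, rfl⟩)
    · exact hW v hv
    · have heq : ((2:ℝ) • vns n s - w) - vns n s = -(w - vns n s) := by
        funext i; simp [Pi.smul_apply]; ring
      rw [heq]
      have : qns n s (-(w - vns n s)) = qns n s (w - vns n s) := by
        unfold qns
        apply Finset.sum_congr rfl
        intro i _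
        simp only [Pi.neg_apply, Pi.sub_apply]
        split <;> ring
      rw [this]
      exact hW w hw
  · rintro u ⟨(hu | ⟨x, hx, rfl⟩), huS⟩
    · -- u ∈ Vset, u ∉ Sns, so u ∉ Wset
      obtain ⟨huint, husum⟩ := hu
      have hnW : u ∉ Wset n s := fun h => huS (Or.inl h)
      have : ∃ j, ¬(u j = 0 ∨ u j = 1) := by
        by_contra hc
        push_neg at hc
        exact hnW ⟨fun i => by have := hc i; tauto, husum⟩
      obtain ⟨j, hj⟩ := this
      push_neg at hj
      rw [qns_ident_A n s h4s u husum]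
      have hpos : 0 < ∑ i, eA n s u i := by
        apply Finset.sum_pos' (fun i _ => eA_nonneg n s u huint i)
        refine ⟨j, Finset.mem_univ j, ?_⟩
        have h := int_mul_sub_one_pos (huint j) hj.1 hj.2
        unfold eA
        split <;> nlinarith
      linarith
    · -- u = tns + x with x ∈ Vset
      obtain ⟨hxint, hxsum⟩ := hx
      have : ∃ j : Fin (n+1), ¬((((j:ℕ) < 2*s ∨ ¬ (j:ℕ) < 4*s) ∧ (x j = 0 ∨ x j = -1)) ∨
          ((¬ (j:ℕ) < 2*s ∧ (j:ℕ) < 4*s) ∧ (x j = 0 ∨ x j = 1))) := by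
        by_contra hc
        push_neg at hc
        -- build the witness w and derive a contradiction
        apply huS
        right
        refine ⟨fun i => if (i:ℕ) < 2*s then -x i else if (i:ℕ) < 4*s then 1 - x i
          else -x i, ⟨?_, ?_⟩, ?_⟩
        · intro i
          dsimp only
          have hi := hc i
          by_cases h2 : (i:ℕ) < 2*s
          · rw [if_pos h2]
            have h : x i = 0 ∨ x i = -1 := by
              rcases hi with ⟨_, h⟩ | ⟨⟨h', _⟩, _⟩
              · exact h
              · omega
            rcases h with h | h
            · left; rw [h]; ring
            · right; rw [h]; ring
          · rw [if_neg h2]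
            by_cases h4 : (i:ℕ) < 4*s
            · rw [if_pos h4]
              have h : x i = 0 ∨ x i = 1 := by
                rcases hi with ⟨h' | h', _⟩ | ⟨_, h⟩
                · omega
                · omega
                · exact h
              rcases h with h | h
              · right; rw [h]; ring
              · left; rw [h]; ring
            · rw [if_neg h4]
              have h : x i = 0 ∨ x i = -1 := by
                rcases hi with ⟨_, h⟩ | ⟨⟨_, h'⟩, _⟩
                · exact h
                · omega
              rcases h with h | h
              · left; rw [h]; ring
              · right; rw [h]; ring
        · -- sum of w is s
          have key : ∀ i : Fin (n+1),
              (if (i:ℕ) < 2*s then -x i else if (i:ℕ) < 4*s then 1 - x i else -x i)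
                = (if (i:ℕ) < 4*s then (1:ℝ) else 0) + (if (i:ℕ) < 2*s then (-1:ℝ) else 0)
                  - x i := by
            intro i
            by_cases h2 : (i:ℕ) < 2*s
            · have h4 : (i:ℕ) < 4*s := by omega
              simp [h2, h4]
            · by_cases h4 : (i:ℕ) < 4*s <;> simp [h2, h4] <;> ring
          rw [Finset.sum_congr rfl (fun i _ => key i), Finset.sum_sub_distrib,
            Finset.sum_add_distrib, hxsum, sum_ite_lt_const n (4*s) h4s 1,
            sum_ite_lt_const n (2*s) (by omega) (-1)]
          push_cast
          ring
        · -- 2 • vns - w = tns + x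
          funext i
          simp only [Pi.sub_apply, Pi.add_apply, Pi.smul_apply, vns, tns]
          by_cases h2 : (i:ℕ) < 2*s
          · have h4 : (i:ℕ) < 4*s := by omega
            simp [h2, h4]; ring
          · by_cases h4 : (i:ℕ) < 4*s
            · simp [h2, h4]; ring
            · simp [h2, h4]
      obtain ⟨j, hj⟩ := this
      push_neg at hj
      rw [qns_ident_B n s h4s x hxsum]
      have hpos : 0 < ∑ i, eB n s x i := by
        apply Finset.sum_pos' (fun i _ => eB_nonneg n s x hxint i)
        refine ⟨j, Finset.mem_univ j, ?_⟩
        unfold eB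
        by_cases h2 : (j:ℕ) < 2*s
        · have h := hj.1 (Or.inl h2)
          have := int_mul_add_one_pos (hxint j) h.1 h.2
          rw [if_pos h2]
          nlinarith
        · rw [if_neg h2]
          by_cases h4 : (j:ℕ) < 4*s
          · have h := hj.2 ⟨by omega, h4⟩
            have := int_mul_sub_one_pos (hxint j) h.1 h.2
            rw [if_pos h4]
            nlinarith
          · have h := hj.1 (Or.inr (by omega))
            have := int_mul_add_one_pos (hxint j) h.1 h.2
            rw [if_neg h4]
            exact this
      linarith
end
end

section
/- Let n, s ∈ ℤ with s ≥ 1 and 4s ≤ n + 1. Then the two sets W(n+1,s) and {2v_{n,s} − v : v ∈ W(n+1,s)} are disjoint, the set of extreme points of the polytope P(n,s) is exactly S(n,s) = W(n+1,s) ∪ {2v_{n,s} − v : v ∈ W(n+1,s)}, and P(n,s) has exactly 2·binom(n+1, s) vertices. Moreover P(n,s) is centrally symmetric with center v_{n,s}: for every vertex v of P(n,s), the point 2v_{n,s} − v is also a vertex. -/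
open Finset

noncomputable section

lemma qns_nonneg (n s : ℕ) (x : Fin (n+1) → ℝ) : 0 ≤ qns n s x := by
  apply Finset.sum_nonneg
  intro i _
  have h : (0:ℝ) ≤ if (i : ℕ) < 4 * s then (2:ℝ) else 1 := by split <;> norm_num
  positivity

lemma qns_eq_zero {n s : ℕ} {x : Fin (n+1) → ℝ} (h : qns n s x = 0) : x = 0 := by
  unfold qns at h
  have hnn : ∀ i ∈ (Finset.univ : Finset (Fin (n+1))),
      (0:ℝ) ≤ (if (i : ℕ) < 4 * s then (2:ℝ) else 1) * (x i) ^ 2 := by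
    intro i _
    have h2 : (0:ℝ) ≤ if (i : ℕ) < 4 * s then (2:ℝ) else 1 := by split <;> norm_num
    positivity
  have hterm := (Finset.sum_eq_zero_iff_of_nonneg hnn).1 h
  funext i
  have hthis := hterm i (Finset.mem_univ i)
  have hc : (if (i : ℕ) < 4 * s then (2:ℝ) else 1) ≠ 0 := by split <;> norm_num
  have hx2 : (x i) ^ 2 = 0 := by
    rcases mul_eq_zero.1 hthis with h' | h'
    · exact absurd h' hc
    · exact h'
  simpa using pow_eq_zero_iff (two_ne_zero) |>.1 hx2

/-- The parallelogram-type identity for `qns`. -/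
lemma qns_combo (n s : ℕ) {a b : ℝ} (hab : a + b = 1) (y z v : Fin (n+1) → ℝ) :
    qns n s (a • y + b • z - v) =
      a * qns n s (y - v) + b * qns n s (z - v) - a * b * qns n s (y - z) := by
  unfold qns
  rw [Finset.mul_sum, Finset.mul_sum, Finset.mul_sum, ← Finset.sum_add_distrib,
    ← Finset.sum_sub_distrib]
  apply Finset.sum_congr rfl
  intro i _
  simp only [Pi.add_apply, Pi.sub_apply, Pi.smul_apply, smul_eq_mul]
  have hb : b = 1 - a := by linarith
  subst hb
  ring

lemma qns_on_W {n s : ℕ} (h4s : 4 * s ≤ n + 1) {w : Fin (n+1) → ℝ}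
    (hw : w ∈ Wset n s) : qns n s (w - vns n s) = 3 * s / 2 := by
  have hterm : ∀ i : Fin (n+1),
      (if (i : ℕ) < 4 * s then (2:ℝ) else 1) * ((w - vns n s) i) ^ 2
        = w i + (fun k : ℕ => if k < 4 * s then (1/8 : ℝ) else 0) (i : ℕ) := by
    intro i
    simp only [Pi.sub_apply, vns]
    rcases hw.1 i with h | h <;> split <;> rw [h] <;> norm_num
  unfold qns
  rw [Finset.sum_congr rfl (fun i _ => hterm i), Finset.sum_add_distrib, hw.2,
    Fin.sum_univ_eq_sum_range (fun k : ℕ => if k < 4 * s then (1/8 : ℝ) else 0)]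
  have hsplit : ∑ k ∈ Finset.range (n+1), (if k < 4 * s then (1/8 : ℝ) else 0)
      = ∑ k ∈ Finset.Ico 0 (4*s), (if k < 4 * s then (1/8 : ℝ) else 0)
        + ∑ k ∈ Finset.Ico (4*s) (n+1), (if k < 4 * s then (1/8 : ℝ) else 0) := by
    rw [Finset.range_eq_Ico, ← Finset.sum_Ico_consecutive _ (Nat.zero_le (4*s)) h4s]
  rw [hsplit]
  have h1 : ∑ k ∈ Finset.Ico 0 (4*s), (if k < 4 * s then (1/8 : ℝ) else 0)
      = (4*s : ℕ) * (1/8 : ℝ) := by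
    rw [Finset.sum_congr rfl (fun k hk => if_pos (Finset.mem_Ico.1 hk).2)]
    simp [mul_comm]
  have h2 : ∑ k ∈ Finset.Ico (4*s) (n+1), (if k < 4 * s then (1/8 : ℝ) else 0) = 0 := by
    apply Finset.sum_eq_zero
    intro k hk
    rw [Finset.mem_Ico] at hk
    exact if_neg (by omega)
  rw [h1, h2]
  push_cast
  ring

lemma qns_neg (n s : ℕ) (x : Fin (n+1) → ℝ) : qns n s (-x) = qns n s x := by
  unfold qns
  apply Finset.sum_congr rfl
  intro i _
  simp only [Pi.neg_apply]
  ring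

lemma qns_on_S {n s : ℕ} (h4s : 4 * s ≤ n + 1) {x : Fin (n+1) → ℝ}
    (hx : x ∈ Sns n s) : qns n s (x - vns n s) = 3 * s / 2 := by
  rcases hx with hx | ⟨w, hw, rfl⟩
  · exact qns_on_W h4s hx
  · have : (2 : ℝ) • vns n s - w - vns n s = -(w - vns n s) := by
      funext i; simp only [Pi.sub_apply, Pi.smul_apply, Pi.neg_apply, smul_eq_mul]; ring
    rw [this, qns_neg]
    exact qns_on_W h4s hw

lemma qns_hull_bound {n s : ℕ} (h4s : 4 * s ≤ n + 1) {p : Fin (n+1) → ℝ}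
    (hp : p ∈ convexHull ℝ (Sns n s)) : qns n s (p - vns n s) ≤ 3 * s / 2 := by
  have hsub : convexHull ℝ (Sns n s) ⊆ {p | qns n s (p - vns n s) ≤ 3 * s / 2} := by
    apply convexHull_min
    · intro x hx
      exact le_of_eq (qns_on_S h4s hx)
    · intro y hy z hz a b ha hb hab
      simp only [Set.mem_setOf_eq] at hy hz ⊢
      rw [qns_combo n s hab]
      have h0 := qns_nonneg n s (y - z)
      have h1 := mul_le_mul_of_nonneg_left hy ha
      have h2 := mul_le_mul_of_nonneg_left hz hb
      have h3 : a * (3 * (s:ℝ) / 2) + b * (3 * (s:ℝ) / 2) = 3 * (s:ℝ) / 2 := by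
        rw [← add_mul, hab]; ring
      linarith [mul_nonneg (mul_nonneg ha hb) h0]
  exact hsub hp

/-- The indicator-function description of `Wset`. -/
lemma Wset_eq_coe (n s : ℕ) :
    Wset n s = ↑((Finset.univ.powersetCard s).image
      (fun A : Finset (Fin (n+1)) => fun i => if i ∈ A then (1:ℝ) else 0)) := by
  ext x
  simp only [Finset.coe_image, Set.mem_image, Finset.mem_coe, Finset.mem_powersetCard]
  constructor
  · intro hx
    refine ⟨Finset.univ.filter (fun i => x i = 1), ?_, ?_⟩
    · constructor
      · exact Finset.subset_univ _
      · have hsum : ∑ i, x i = ((Finset.univ.filter (fun i => x i = 1)).card : ℝ) := by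
          rw [← Finset.sum_boole]
          apply Finset.sum_congr rfl
          intro i _
          rcases hx.1 i with h | h <;> simp [h]
        have h2 := hx.2
        rw [hsum] at h2
        exact_mod_cast h2
    · funext i
      rcases hx.1 i with h | h <;> simp [h]
  · rintro ⟨A, ⟨-, hcard⟩, rfl⟩
    constructor
    · intro i; by_cases h : i ∈ A <;> simp [h]
    · rw [Finset.sum_ite_mem, Finset.univ_inter, Finset.sum_const, ← hcard]
      simp

lemma Wset_finite (n s : ℕ) : (Wset n s).Finite := by
  rw [Wset_eq_coe]
  exact Finset.finite_toSet _

lemma Wset_ncard (n s : ℕ) : (Wset n s).ncard = (n+1).choose s := by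
  rw [Wset_eq_coe, Set.ncard_coe_finset]
  have hinj : Function.Injective
      (fun A : Finset (Fin (n+1)) => fun i => if i ∈ A then (1:ℝ) else 0) := by
    intro A B h
    ext i
    have := congrFun h i
    by_cases hA : i ∈ A <;> by_cases hB : i ∈ B <;> simp [hA, hB] at this ⊢
  rw [Finset.card_image_of_injective _ hinj, Finset.card_powersetCard]
  simp

lemma reflect_injective (n s : ℕ) :
    Function.Injective (fun v : Fin (n+1) → ℝ => (2 : ℝ) • vns n s - v) :=
  fun a b h => by
    have := congrArg (fun y => (2 : ℝ) • vns n s - y) h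
    simpa using this

/-- The two halves of `S(n,s)` are disjoint, the extreme points of
`P(n,s) = conv S(n,s)` are exactly `S(n,s)`, `P(n,s)` has `2·C(n+1,s)` vertices, and
`P(n,s)` is centrally symmetric with center `v_{n,s}`. -/
theorem Pns_vertices (n s : ℕ) (hs : 1 ≤ s) (h4s : 4 * s ≤ n + 1) :
    Disjoint (Wset n s) ((fun v => (2 : ℝ) • vns n s - v) '' Wset n s) ∧
    Set.extremePoints ℝ (convexHull ℝ (Sns n s)) = Sns n s ∧
    (Sns n s).ncard = 2 * (n + 1).choose s ∧
    (∀ v ∈ Set.extremePoints ℝ (convexHull ℝ (Sns n s)),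
      (2 : ℝ) • vns n s - v ∈ Set.extremePoints ℝ (convexHull ℝ (Sns n s))) := by
  have hdisj : Disjoint (Wset n s) ((fun v => (2 : ℝ) • vns n s - v) '' Wset n s) := by
    rw [Set.disjoint_left]
    rintro x hx ⟨w, hw, rfl⟩
    have h0 : (0 : ℕ) < 4 * s := by omega
    have i0 : Fin (n+1) := ⟨0, Nat.succ_pos n⟩
    have hxval := hx.1 ⟨0, Nat.succ_pos n⟩
    have hwval := hw.1 ⟨0, Nat.succ_pos n⟩
    simp only [Pi.sub_apply, Pi.smul_apply, smul_eq_mul, vns] at hxval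
    rw [if_pos h0] at hxval
    rcases hwval with h | h <;> rw [h] at hxval <;>
      rcases hxval with h' | h' <;> norm_num at h'
  have hext : Set.extremePoints ℝ (convexHull ℝ (Sns n s)) = Sns n s := by
    apply Set.Subset.antisymm
    · exact extremePoints_convexHull_subset
    · intro x hx
      rw [mem_extremePoints]
      refine ⟨subset_convexHull ℝ _ hx, ?_⟩
      intro y hy z hz hseg
      obtain ⟨a, b, ha, hb, hab, hxeq⟩ := hseg
      have hqx : qns n s (x - vns n s) = 3 * s / 2 := qns_on_S h4s hx
      have hqy := qns_hull_bound h4s hy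
      have hqz := qns_hull_bound h4s hz
      have hcombo := qns_combo n s hab y z (vns n s)
      rw [hxeq] at hcombo
      rw [hqx] at hcombo
      have hyz0 : qns n s (y - z) ≤ 0 := by
        have h1 := mul_le_mul_of_nonneg_left hqy ha.le
        have h2 := mul_le_mul_of_nonneg_left hqz hb.le
        have h3 : a * (3 * (s:ℝ) / 2) + b * (3 * (s:ℝ) / 2) = 3 * (s:ℝ) / 2 := by
          rw [← add_mul, hab]; ring
        have habq : a * b * qns n s (y - z) ≤ 0 := by linarith
        by_contra hpos
        push_neg at hpos
        have := mul_pos (mul_pos ha hb) hpos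
        linarith
      have hyz : y = z := by
        have := qns_eq_zero (le_antisymm hyz0 (qns_nonneg n s (y - z)))
        exact sub_eq_zero.1 this
      subst hyz
      have hxy : y = x := by
        rw [← hxeq, ← add_smul, hab, one_smul]
      exact ⟨hxy, hxy⟩
  refine ⟨hdisj, hext, ?_, ?_⟩
  · have himg : ((fun v => (2 : ℝ) • vns n s - v) '' Wset n s).ncard = (Wset n s).ncard :=
      Set.ncard_image_of_injective _ (reflect_injective n s)
    rw [Sns, Set.ncard_union_eq hdisj (Wset_finite n s)
      ((Wset_finite n s).image _), himg, Wset_ncard]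
    ring
  · intro v hv
    rw [hext] at hv ⊢
    rcases hv with hv | ⟨w, hw, rfl⟩
    · exact Or.inr ⟨v, hv, rfl⟩
    · left
      have : (2 : ℝ) • vns n s - ((2 : ℝ) • vns n s - w) = w := by
        funext i
        simp only [Pi.sub_apply, Pi.smul_apply, smul_eq_mul]
        ring
      rw [this]
      exact hw
end
end

section
/- Let n be odd, s ≥ 1, and 4s ≤ n + 1. Then for every v ∈ V_{n,s}: q_{n,s}(v_{n,s} − w_{n,s} − v) ≥ (n+1)/4 and q_{n,s}(v_{n,s} − w_{n,s} − t_{n,s} − v) ≥ (n+1)/4. Consequently, every point of the coset w_{n,s} + V²_{n,s} is at squared q_{n,s}-distance at least (n+1)/4 from v_{n,s}. -/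
open Finset

noncomputable section

/-- The standard basis vector `e_1` (1 in coordinate index 1). -/
def e1 (n : ℕ) : Fin (n+1) → ℝ := fun i => if (i : ℕ) = 1 then 1 else 0

/-- For `n` odd, the vector
`w_{n,s} = ((1/4)^{2s}; (−1/4)^{2s}; (1/2)^{n+1−4s}) − ((n+1−4s)/2)·e_1`. -/
def wOdd (n s : ℕ) : Fin (n+1) → ℝ := fun i =>
  (if (i : ℕ) < 2 * s then 1 / 4
   else if (i : ℕ) < 4 * s then -(1 / 4) else 1 / 2)
  - (((n : ℝ) + 1 - 4 * s) / 2) * e1 n i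

/-- For `n` even, the vector
`w_{n,s} = ((1/4)^{2s}; (−1/4)^{2s}; 0; (1/2)^{n−4s}) − ((n−4s)/2)·e_1`. -/
def wEven (n s : ℕ) : Fin (n+1) → ℝ := fun i =>
  (if (i : ℕ) < 2 * s then 1 / 4
   else if (i : ℕ) < 4 * s then -(1 / 4)
   else if (i : ℕ) = 4 * s then 0 else 1 / 2)
  - (((n : ℝ) - 4 * s) / 2) * e1 n i


private lemma half_sq (a : ℝ) (m : ℤ) (h : a = m + 1/2) : 1/4 ≤ a^2 := by
  subst h
  rcases le_or_gt 0 m with hm | hm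
  · have hm' : (0:ℝ) ≤ (m:ℝ) := by exact_mod_cast hm
    nlinarith
  · have hm2 : m ≤ -1 := by omega
    have hm' : (m:ℝ) ≤ -1 := by exact_mod_cast hm2
    nlinarith

private lemma sumB (n s : ℕ) (h4s : 4 * s ≤ n + 1) (a b : ℝ) :
    ∑ i : Fin (n+1), (if (i : ℕ) < 2 * s then a else if (i : ℕ) < 4 * s then b else (1/4:ℝ))
      = 2 * s * a + 2 * s * b + ((n:ℝ) + 1 - 4 * s) / 4 := by
  rw [Fin.sum_univ_eq_sum_range (fun i => if i < 2 * s then a else if i < 4 * s then b else (1/4:ℝ))]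
  rw [Finset.range_eq_Ico, ← Finset.sum_Ico_consecutive _ (Nat.zero_le (4*s)) h4s,
      ← Finset.sum_Ico_consecutive _ (Nat.zero_le (2*s)) (by omega : 2*s ≤ 4*s)]
  have e1 : ∑ i ∈ Finset.Ico 0 (2*s),
      (if i < 2 * s then a else if i < 4 * s then b else (1/4:ℝ)) = 2*s*a := by
    rw [Finset.sum_congr rfl (g := fun _ => a) (fun i hi => by
      simp only [Finset.mem_Ico] at hi; simp [hi.2]), Finset.sum_const, Nat.card_Ico,
      nsmul_eq_mul, Nat.sub_zero]
    push_cast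
    ring
  have e2 : ∑ i ∈ Finset.Ico (2*s) (4*s),
      (if i < 2 * s then a else if i < 4 * s then b else (1/4:ℝ)) = 2*s*b := by
    rw [Finset.sum_congr rfl (g := fun _ => b) (fun i hi => by
      simp only [Finset.mem_Ico] at hi
      rw [if_neg (by omega), if_pos hi.2]), Finset.sum_const, Nat.card_Ico, nsmul_eq_mul]
    have : 4*s - 2*s = 2*s := by omega
    rw [this]
    push_cast
    ring
  have e3 : ∑ i ∈ Finset.Ico (4*s) (n+1),
      (if i < 2 * s then a else if i < 4 * s then b else (1/4:ℝ)) = ((n:ℝ)+1-4*s)/4 := by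
    rw [Finset.sum_congr rfl (g := fun _ => (1/4:ℝ)) (fun i hi => by
      simp only [Finset.mem_Ico] at hi
      rw [if_neg (by omega), if_neg (by omega)]), Finset.sum_const, Nat.card_Ico, nsmul_eq_mul]
    rw [Nat.cast_sub h4s]
    push_cast
    ring
  rw [e1, e2, e3]

private lemma key1 (n s : ℕ) (hs : 1 ≤ s) (h4s : 4 * s ≤ n + 1)
    (v : Fin (n+1) → ℝ) (hint : ∀ i, ∃ m : ℤ, v i = (m : ℝ)) :
    ((n : ℝ) + 1) / 4 ≤ qns n s (vns n s - wOdd n s - v) := by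
  have hB := sumB n s h4s 0 (1/2)
  have hle : ∑ i : Fin (n+1),
      (if (i : ℕ) < 2 * s then (0:ℝ) else if (i : ℕ) < 4 * s then 1/2 else 1/4)
      ≤ qns n s (vns n s - wOdd n s - v) := by
    unfold qns
    apply Finset.sum_le_sum
    intro i _
    obtain ⟨m, hm⟩ := hint i
    by_cases h1 : (i:ℕ) < 2*s
    · rw [if_pos h1]
      split_ifs <;> positivity
    · by_cases h2 : (i:ℕ) < 4*s
      · rw [if_neg h1, if_pos h2, if_pos h2]
        have hne : (i:ℕ) ≠ 1 := by omega
        have hx : (vns n s - wOdd n s - v) i = ((-m : ℤ) : ℝ) + 1/2 := by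
          simp only [Pi.sub_apply, vns, wOdd, e1, if_pos h2, if_neg h1, if_neg hne, hm]
          push_cast
          ring
        have := half_sq _ _ hx
        linarith
      · rw [if_neg h1, if_neg h2, if_neg h2]
        have hne : (i:ℕ) ≠ 1 := by omega
        have hx : (vns n s - wOdd n s - v) i = ((-m - 1 : ℤ) : ℝ) + 1/2 := by
          simp only [Pi.sub_apply, vns, wOdd, e1, if_neg h2, if_neg h1, if_neg hne, hm]
          push_cast
          ring
        have := half_sq _ _ hx
        linarith
  calc ((n : ℝ) + 1) / 4 = 2*s*0 + 2*s*(1/2) + ((n:ℝ)+1-4*s)/4 := by ring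
    _ = _ := hB.symm
    _ ≤ _ := hle

private lemma key2 (n s : ℕ) (hodd : Odd n) (hs : 1 ≤ s) (h4s : 4 * s ≤ n + 1)
    (v : Fin (n+1) → ℝ) (hint : ∀ i, ∃ m : ℤ, v i = (m : ℝ)) :
    ((n : ℝ) + 1) / 4 ≤ qns n s (vns n s - wOdd n s - tns n s - v) := by
  obtain ⟨k, hk⟩ := hodd
  have hB := sumB n s h4s (1/2) 0
  have hle : ∑ i : Fin (n+1),
      (if (i : ℕ) < 2 * s then (1/2:ℝ) else if (i : ℕ) < 4 * s then 0 else 1/4)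
      ≤ qns n s (vns n s - wOdd n s - tns n s - v) := by
    unfold qns
    apply Finset.sum_le_sum
    intro i _
    obtain ⟨m, hm⟩ := hint i
    by_cases h1 : (i:ℕ) < 2*s
    · have h2 : (i:ℕ) < 4*s := by omega
      rw [if_pos h1, if_pos h2]
      by_cases hi1 : (i:ℕ) = 1
      · have hx : (vns n s - wOdd n s - tns n s - v) i = ((k - 2*s - m : ℤ) : ℝ) + 1/2 := by
          simp only [Pi.sub_apply, vns, wOdd, tns, e1, if_pos h1, if_pos h2, if_pos hi1, hm, hk]
          push_cast
          ring
        have := half_sq _ _ hx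
        linarith
      · have hx : (vns n s - wOdd n s - tns n s - v) i = ((-m - 1 : ℤ) : ℝ) + 1/2 := by
          simp only [Pi.sub_apply, vns, wOdd, tns, e1, if_pos h1, if_pos h2, if_neg hi1, hm]
          push_cast
          ring
        have := half_sq _ _ hx
        linarith
    · by_cases h2 : (i:ℕ) < 4*s
      · rw [if_neg h1, if_pos h2]
        split_ifs <;> positivity
      · rw [if_neg h1, if_neg h2, if_neg h2]
        have hne : (i:ℕ) ≠ 1 := by omega
        have hx : (vns n s - wOdd n s - tns n s - v) i = ((-m - 1 : ℤ) : ℝ) + 1/2 := by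
          simp only [Pi.sub_apply, vns, wOdd, tns, e1, if_neg h2, if_neg h1, if_neg hne, hm]
          push_cast
          ring
        have := half_sq _ _ hx
        linarith
  calc ((n : ℝ) + 1) / 4 = 2*s*(1/2) + 2*s*0 + ((n:ℝ)+1-4*s)/4 := by ring
    _ = _ := hB.symm
    _ ≤ _ := hle

/-- For `n` odd, every point of the coset `w_{n,s} + V²_{n,s}` is at squared
`q_{n,s}`-distance at least `(n+1)/4` from `v_{n,s}`. -/
theorem coset_far_odd (n s : ℕ) (hodd : Odd n) (hs : 1 ≤ s) (h4s : 4 * s ≤ n + 1) :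
    (∀ v ∈ Vset n s,
      ((n : ℝ) + 1) / 4 ≤ qns n s (vns n s - wOdd n s - v) ∧
      ((n : ℝ) + 1) / 4 ≤ qns n s (vns n s - wOdd n s - tns n s - v)) ∧
    (∀ u ∈ V2 n s, ((n : ℝ) + 1) / 4 ≤ qns n s (vns n s - (wOdd n s + u))) := by
  refine ⟨fun v hv => ⟨key1 n s hs h4s v hv.1, key2 n s hodd hs h4s v hv.1⟩, ?_⟩
  intro u hu
  rcases hu with h | ⟨v', hv', rfl⟩
  · have h1 := key1 n s hs h4s u h.1
    have he : vns n s - (wOdd n s + u) = vns n s - wOdd n s - u := by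
      funext i
      simp only [Pi.sub_apply, Pi.add_apply]
      ring
    rw [he]
    exact h1
  · have h2 := key2 n s hodd hs h4s v' hv'.1
    have he : vns n s - (wOdd n s + (tns n s + v')) = vns n s - wOdd n s - tns n s - v' := by
      funext i
      simp only [Pi.sub_apply, Pi.add_apply]
      ring
    rw [he]
    exact h2
end
end

section
/- Let n be even, s ≥ 1, and 4s ≤ n. Then for every v ∈ V_{n,s}: q_{n,s}(v_{n,s} − w_{n,s} − v) ≥ n/4 and q_{n,s}(v_{n,s} − w_{n,s} − t_{n,s} − v) ≥ n/4. Consequently, every point of the coset w_{n,s} + V²_{n,s} is at squared q_{n,s}-distance at least n/4 from v_{n,s}. -/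
open Finset

noncomputable section

/-- A half-integer has square at least `1/4`. -/
lemma half_sq_s14 (k : ℤ) : (1/4 : ℝ) ≤ ((k : ℝ) + 1/2) ^ 2 := by
  have h : (0 : ℤ) ≤ k * (k + 1) := by
    rcases le_or_gt 0 k with h | h
    · exact mul_nonneg h (by omega)
    · nlinarith [h, (by omega : k + 1 ≤ 0)]
  have h' : (0 : ℝ) ≤ (k : ℝ) * ((k : ℝ) + 1) := by exact_mod_cast h
  nlinarith

lemma sum_g1 (n s : ℕ) (h4s : 4 * s ≤ n) :
    ∑ k ∈ Finset.range (n+1),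
      (if 2 * s ≤ k ∧ k < 4 * s then (1/2 : ℝ) else if 4 * s < k then 1/4 else 0)
      = (n : ℝ) / 4 := by
  rw [Finset.range_eq_Ico,
    ← Finset.sum_Ico_consecutive _ (Nat.zero_le (4*s+1)) (by omega : 4*s+1 ≤ n+1),
    ← Finset.sum_Ico_consecutive _ (Nat.zero_le (2*s)) (by omega : 2*s ≤ 4*s+1),
    ← Finset.sum_Ico_consecutive _ (by omega : 2*s ≤ 4*s) (by omega : 4*s ≤ 4*s+1)]
  have hA : ∑ k ∈ Finset.Ico 0 (2*s),
      (if 2 * s ≤ k ∧ k < 4 * s then (1/2 : ℝ) else if 4 * s < k then 1/4 else 0) = 0 := by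
    apply Finset.sum_eq_zero
    intro k hk
    simp only [Finset.mem_Ico] at hk
    rw [if_neg (by omega), if_neg (by omega)]
  have hB : ∑ k ∈ Finset.Ico (2*s) (4*s),
      (if 2 * s ≤ k ∧ k < 4 * s then (1/2 : ℝ) else if 4 * s < k then 1/4 else 0)
      = (s : ℝ) := by
    rw [Finset.sum_congr rfl (fun k hk => by
      simp only [Finset.mem_Ico] at hk
      rw [if_pos (by omega)]), Finset.sum_const, Nat.card_Ico]
    have : 4 * s - 2 * s = 2 * s := by omega
    rw [this]
    ring_nf
  have hC : ∑ k ∈ Finset.Ico (4*s) (4*s+1),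
      (if 2 * s ≤ k ∧ k < 4 * s then (1/2 : ℝ) else if 4 * s < k then 1/4 else 0) = 0 := by
    apply Finset.sum_eq_zero
    intro k hk
    simp only [Finset.mem_Ico] at hk
    rw [if_neg (by omega), if_neg (by omega)]
  have hD : ∑ k ∈ Finset.Ico (4*s+1) (n+1),
      (if 2 * s ≤ k ∧ k < 4 * s then (1/2 : ℝ) else if 4 * s < k then 1/4 else 0)
      = ((n : ℝ) - 4 * s) / 4 := by
    rw [Finset.sum_congr rfl (fun k hk => by
      simp only [Finset.mem_Ico] at hk
      rw [if_neg (by omega), if_pos (by omega)]), Finset.sum_const, Nat.card_Ico]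
    have : n + 1 - (4*s+1) = n - 4*s := by omega
    rw [this]
    have : ((n - 4*s : ℕ) : ℝ) = (n : ℝ) - 4 * s := by
      push_cast [Nat.cast_sub h4s]
      ring
    rw [nsmul_eq_mul, this]
    ring
  rw [hA, hB, hC, hD]
  ring

lemma sum_g2 (n s : ℕ) (h4s : 4 * s ≤ n) :
    ∑ k ∈ Finset.range (n+1),
      (if k < 2 * s then (1/2 : ℝ) else if 4 * s < k then 1/4 else 0)
      = (n : ℝ) / 4 := by
  rw [Finset.range_eq_Ico,
    ← Finset.sum_Ico_consecutive _ (Nat.zero_le (4*s+1)) (by omega : 4*s+1 ≤ n+1),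
    ← Finset.sum_Ico_consecutive _ (Nat.zero_le (2*s)) (by omega : 2*s ≤ 4*s+1)]
  have hA : ∑ k ∈ Finset.Ico 0 (2*s),
      (if k < 2 * s then (1/2 : ℝ) else if 4 * s < k then 1/4 else 0) = (s : ℝ) := by
    rw [Finset.sum_congr rfl (fun k hk => by
      simp only [Finset.mem_Ico] at hk
      rw [if_pos (by omega)]), Finset.sum_const, Nat.card_Ico]
    have : 2 * s - 0 = 2 * s := by omega
    rw [this]
    ring_nf
  have hB : ∑ k ∈ Finset.Ico (2*s) (4*s+1),
      (if k < 2 * s then (1/2 : ℝ) else if 4 * s < k then 1/4 else 0) = 0 := by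
    apply Finset.sum_eq_zero
    intro k hk
    simp only [Finset.mem_Ico] at hk
    rw [if_neg (by omega), if_neg (by omega)]
  have hD : ∑ k ∈ Finset.Ico (4*s+1) (n+1),
      (if k < 2 * s then (1/2 : ℝ) else if 4 * s < k then 1/4 else 0)
      = ((n : ℝ) - 4 * s) / 4 := by
    rw [Finset.sum_congr rfl (fun k hk => by
      simp only [Finset.mem_Ico] at hk
      rw [if_neg (by omega), if_pos (by omega)]), Finset.sum_const, Nat.card_Ico]
    have : n + 1 - (4*s+1) = n - 4*s := by omega
    rw [this]
    have : ((n - 4*s : ℕ) : ℝ) = (n : ℝ) - 4 * s := by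
      push_cast [Nat.cast_sub h4s]
      ring
    rw [nsmul_eq_mul, this]
    ring
  rw [hA, hB, hD]
  ring

/-- Lower bound for `qns` when the coordinates in the middle block and the high
block are half-integers. -/
lemma qns_lower1 (n s : ℕ) (h4s : 4 * s ≤ n) (x : Fin (n+1) → ℝ)
    (hmid : ∀ i : Fin (n+1), 2 * s ≤ (i : ℕ) → (i : ℕ) < 4 * s →
      ∃ k : ℤ, x i = (k : ℝ) + 1/2)
    (hhigh : ∀ i : Fin (n+1), 4 * s < (i : ℕ) → ∃ k : ℤ, x i = (k : ℝ) + 1/2) :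
    (n : ℝ) / 4 ≤ qns n s x := by
  calc (n : ℝ) / 4
      = ∑ k ∈ Finset.range (n+1),
        (if 2 * s ≤ k ∧ k < 4 * s then (1/2 : ℝ) else if 4 * s < k then 1/4 else 0) :=
        (sum_g1 n s h4s).symm
    _ = ∑ i : Fin (n+1),
        (if 2 * s ≤ (i : ℕ) ∧ (i : ℕ) < 4 * s then (1/2 : ℝ)
          else if 4 * s < (i : ℕ) then 1/4 else 0) :=
        (Fin.sum_univ_eq_sum_range _ _).symm
    _ ≤ qns n s x := by
        apply Finset.sum_le_sum
        intro i _
        by_cases hm : 2 * s ≤ (i : ℕ) ∧ (i : ℕ) < 4 * s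
        · obtain ⟨k, hk⟩ := hmid i hm.1 hm.2
          rw [if_pos hm, if_pos hm.2, hk]
          have := half_sq_s14 k
          nlinarith
        · rw [if_neg hm]
          by_cases hh : 4 * s < (i : ℕ)
          · obtain ⟨k, hk⟩ := hhigh i hh
            rw [if_pos hh, if_neg (by omega), hk]
            have := half_sq_s14 k
            nlinarith
          · rw [if_neg hh]
            positivity

/-- Lower bound for `qns` when the coordinates in the low block and the high
block are half-integers. -/
lemma qns_lower2 (n s : ℕ) (h4s : 4 * s ≤ n) (x : Fin (n+1) → ℝ)
    (hlow : ∀ i : Fin (n+1), (i : ℕ) < 2 * s → ∃ k : ℤ, x i = (k : ℝ) + 1/2)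
    (hhigh : ∀ i : Fin (n+1), 4 * s < (i : ℕ) → ∃ k : ℤ, x i = (k : ℝ) + 1/2) :
    (n : ℝ) / 4 ≤ qns n s x := by
  calc (n : ℝ) / 4
      = ∑ k ∈ Finset.range (n+1),
        (if k < 2 * s then (1/2 : ℝ) else if 4 * s < k then 1/4 else 0) :=
        (sum_g2 n s h4s).symm
    _ = ∑ i : Fin (n+1),
        (if (i : ℕ) < 2 * s then (1/2 : ℝ) else if 4 * s < (i : ℕ) then 1/4 else 0) :=
        (Fin.sum_univ_eq_sum_range _ _).symm
    _ ≤ qns n s x := by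
        apply Finset.sum_le_sum
        intro i _
        by_cases hm : (i : ℕ) < 2 * s
        · obtain ⟨k, hk⟩ := hlow i hm
          rw [if_pos hm, if_pos (by omega), hk]
          have := half_sq_s14 k
          nlinarith
        · rw [if_neg hm]
          by_cases hh : 4 * s < (i : ℕ)
          · obtain ⟨k, hk⟩ := hhigh i hh
            rw [if_pos hh, if_neg (by omega), hk]
            have := half_sq_s14 k
            nlinarith
          · rw [if_neg hh]
            positivity

/-- For `n` even, every point of the coset `w_{n,s} + V²_{n,s}` is at squared
`q_{n,s}`-distance at least `n/4` from `v_{n,s}`. -/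
theorem coset_far_even (n s : ℕ) (heven : Even n) (hs : 1 ≤ s) (h4s : 4 * s ≤ n) :
    (∀ v ∈ Vset n s,
      (n : ℝ) / 4 ≤ qns n s (vns n s - wEven n s - v) ∧
      (n : ℝ) / 4 ≤ qns n s (vns n s - wEven n s - tns n s - v)) ∧
    (∀ u ∈ V2 n s, (n : ℝ) / 4 ≤ qns n s (vns n s - (wEven n s + u))) := by
  obtain ⟨r, hr⟩ := heven
  have hnr : ((n : ℝ) - 4 * s) / 2 = (r : ℝ) - 2 * s := by
    subst hr; push_cast; ring
  have main : ∀ v ∈ Vset n s,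
      (n : ℝ) / 4 ≤ qns n s (vns n s - wEven n s - v) ∧
      (n : ℝ) / 4 ≤ qns n s (vns n s - wEven n s - tns n s - v) := by
    intro v hv
    constructor
    · apply qns_lower1 n s h4s
      · intro i hi1 hi2
        obtain ⟨m, hm⟩ := hv.1 i
        refine ⟨-m, ?_⟩
        simp only [Pi.sub_apply, vns, wEven, e1, hm]
        rw [if_pos hi2, if_neg (not_lt.2 hi1), if_pos hi2,
          if_neg (show ¬ (i : ℕ) = 1 by omega)]
        push_cast; ring
      · intro i hi
        obtain ⟨m, hm⟩ := hv.1 i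
        refine ⟨-m - 1, ?_⟩
        simp only [Pi.sub_apply, vns, wEven, e1, hm]
        rw [if_neg (show ¬ (i : ℕ) < 4 * s by omega),
          if_neg (show ¬ (i : ℕ) < 2 * s by omega),
          if_neg (show ¬ (i : ℕ) < 4 * s by omega),
          if_neg (show ¬ (i : ℕ) = 4 * s by omega),
          if_neg (show ¬ (i : ℕ) = 1 by omega)]
        push_cast; ring
    · apply qns_lower2 n s h4s
      · intro i hi
        obtain ⟨m, hm⟩ := hv.1 i
        by_cases h1 : (i : ℕ) = 1
        · refine ⟨(r : ℤ) - 2 * s - 1 - m, ?_⟩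
          simp only [Pi.sub_apply, vns, wEven, tns, e1, hm]
          rw [if_pos (show (i : ℕ) < 4 * s by omega), if_pos hi, if_pos hi,
            if_pos h1, hnr]
          push_cast; ring
        · refine ⟨-m - 1, ?_⟩
          simp only [Pi.sub_apply, vns, wEven, tns, e1, hm]
          rw [if_pos (show (i : ℕ) < 4 * s by omega), if_pos hi, if_pos hi,
            if_neg h1]
          push_cast; ring
      · intro i hi
        obtain ⟨m, hm⟩ := hv.1 i
        refine ⟨-m - 1, ?_⟩
        simp only [Pi.sub_apply, vns, wEven, tns, e1, hm]
        rw [if_neg (show ¬ (i : ℕ) < 4 * s by omega),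
          if_neg (show ¬ (i : ℕ) < 2 * s by omega),
          if_neg (show ¬ (i : ℕ) < 4 * s by omega),
          if_neg (show ¬ (i : ℕ) = 4 * s by omega),
          if_neg (show ¬ (i : ℕ) = 1 by omega),
          if_neg (show ¬ (i : ℕ) < 2 * s by omega),
          if_neg (show ¬ (i : ℕ) < 4 * s by omega)]
        push_cast; ring
  refine ⟨main, ?_⟩
  intro u hu
  rcases hu with hu | ⟨v, hv, rfl⟩
  · rw [sub_add_eq_sub_sub]
    exact (main u hu).1
  · rw [sub_add_eq_sub_sub, sub_add_eq_sub_sub]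
    exact (main v hv).2
end
end
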